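/- arXiv:1009.0700 — 7 statements merged into one kernel-verified Lean document; each statement's English description precedes it below -/
import Mathlib

section
/- Let A be a linear subspace of ℝ^d and define T : C_0^d[0,∞) → [0,∞] by T(f) = inf { t ≥ 0 : f(t) ∈ A and f(u) ∉ A for all u with t < u ≤ t + 1 } (with inf ∅ = ∞). Then T is Borel measurable. -/
open scoped NNReal ENNReal

noncomputable section

/-- `T(f) = inf { t ≥ 0 : f(t) ∈ A and f(u) ∉ A for all t < u ≤ t+1 }`, with
`inf ∅ = ∞`, as a value in `[0,∞]`. -/
def hittingTime (d : ℕ) (A : Submodule ℝ (EuclideanSpace ℝ (Fin d)))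
    (f : ℝ≥0 → EuclideanSpace ℝ (Fin d)) : ℝ≥0∞ :=
  sInf {x : ℝ≥0∞ | ∃ t : ℝ≥0, x = (t : ℝ≥0∞) ∧
    f t ∈ (A : Set (EuclideanSpace ℝ (Fin d))) ∧
    ∀ u : ℝ≥0, t < u → u ≤ t + 1 → f u ∉ (A : Set (EuclideanSpace ℝ (Fin d)))}

namespace HTAux

open Metric Set

variable {d : ℕ} (A : Submodule ℝ (EuclideanSpace ℝ (Fin d)))

local notation "E'" => EuclideanSpace ℝ (Fin d)

/-- coercion of a rational into `ℝ≥0`. -/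
def rq (r : ℚ) : ℝ≥0 := Real.toNNReal r

lemma hAclosed : IsClosed (A : Set E') := A.closed_of_finiteDimensional

lemma hAne : (A : Set E').Nonempty := ⟨0, A.zero_mem⟩

lemma mem_iff (x : E') : x ∈ A ↔ infDist x (A : Set E') = 0 := by
  simpa using (hAclosed A).mem_iff_infDist_zero (hAne A)

/-- Core compactness/density characterization of hitting a closed set on an interval
whose left endpoint is rational. -/
lemma hit_iff (f : C(ℝ≥0, E')) (a b : ℝ≥0) (ha : ∃ p : ℚ, rq p = a) :
    (∃ t, a ≤ t ∧ t ≤ b ∧ f t ∈ A) ↔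
    ∀ n : ℕ, ∃ r : ℚ, a ≤ rq r ∧ rq r ≤ b ∧
      infDist (f (rq r)) (A : Set E') < 1 / (n + 1 : ℝ) := by
  constructor
  · rintro ⟨t, hat, htb, htA⟩ n
    have hεpos : (0 : ℝ) < 1 / (n + 1 : ℝ) := by positivity
    have h0 : infDist (f t) (A : Set E') = 0 := infDist_zero_of_mem htA
    have hcont : ContinuousAt (fun s : ℝ≥0 => infDist (f s) (A : Set E')) t :=
      ((continuous_infDist_pt _).comp f.continuous).continuousAt
    obtain ⟨δ, hδpos, hδ⟩ := Metric.continuousAt_iff.1 hcont (1 / (n + 1 : ℝ)) hεpos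
    rcases eq_or_lt_of_le hat with heq | hlt
    · obtain ⟨p, hp⟩ := ha
      refine ⟨p, le_of_eq hp.symm, ?_, ?_⟩
      · rw [hp, heq]; exact htb
      · rw [hp, heq, h0]; exact hεpos
    · have hL : max (a : ℝ) ((t : ℝ) - δ) < (t : ℝ) :=
        max_lt (by exact_mod_cast hlt) (by linarith)
      obtain ⟨r, hr1, hr2⟩ := exists_rat_btwn hL
      have hr0 : (0 : ℝ) < (r : ℝ) := lt_of_le_of_lt a.2 ((le_max_left _ _).trans_lt hr1)
      have hcoe : ((rq r : ℝ≥0) : ℝ) = (r : ℝ) := Real.coe_toNNReal _ hr0.le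
      have har : a ≤ rq r := by
        rw [← NNReal.coe_le_coe, hcoe]; exact (le_max_left _ _).trans hr1.le
      have hrt : rq r < t := by rw [← NNReal.coe_lt_coe, hcoe]; exact hr2
      refine ⟨r, har, hrt.le.trans htb, ?_⟩
      have hd : dist (rq r) t < δ := by
        rw [NNReal.dist_eq, hcoe, abs_sub_lt_iff]
        have h3 : (t : ℝ) - δ < (r : ℝ) := (le_max_right _ _).trans_lt hr1
        constructor <;> linarith
      have := hδ hd
      rw [h0] at this
      simpa [Real.dist_eq, abs_of_nonneg infDist_nonneg] using this
  · intro h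
    by_contra hno
    push_neg at hno
    by_cases hab : a ≤ b
    · have hcomp : IsCompact (Icc a b) := isCompact_Icc
      have hcont : ContinuousOn (fun s : ℝ≥0 => infDist (f s) (A : Set E')) (Icc a b) :=
        ((continuous_infDist_pt _).comp f.continuous).continuousOn
      obtain ⟨t₀, ht₀mem, ht₀min⟩ := hcomp.exists_isMinOn ⟨a, left_mem_Icc.2 hab⟩ hcont
      have hpos : 0 < infDist (f t₀) (A : Set E') := by
        rcases lt_or_eq_of_le (infDist_nonneg : 0 ≤ infDist (f t₀) (A : Set E')) with h' | h'
        · exact h'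
        · exact absurd ((mem_iff A _).2 h'.symm) (hno t₀ ht₀mem.1 ht₀mem.2)
      obtain ⟨n, hn⟩ := exists_nat_one_div_lt hpos
      obtain ⟨r, har, hrb, hlt⟩ := h n
      exact absurd hlt (not_lt.2 (hn.le.trans (ht₀min ⟨har, hrb⟩)))
    · obtain ⟨r, har, hrb, _⟩ := h 0
      exact hab (har.trans hrb)

variable [MeasurableSpace C(ℝ≥0, EuclideanSpace ℝ (Fin d))]
  [BorelSpace C(ℝ≥0, EuclideanSpace ℝ (Fin d))]

lemma meas_infDist (t : ℝ≥0) :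
    Measurable fun f : C(ℝ≥0, E') => infDist (f t) (A : Set E') :=
  ((continuous_infDist_pt _).comp (ContinuousEvalConst.continuous_eval_const t)).measurable

lemma meas_hit (a : ℝ≥0) (ha : ∃ p : ℚ, rq p = a) {B : C(ℝ≥0, E') → ℝ≥0}
    (hB : Measurable B) :
    MeasurableSet {f : C(ℝ≥0, E') | ∃ t, a ≤ t ∧ t ≤ B f ∧ f t ∈ A} := by
  have hset : {f : C(ℝ≥0, E') | ∃ t, a ≤ t ∧ t ≤ B f ∧ f t ∈ A} =
      ⋂ n : ℕ, ⋃ r : ℚ, {f : C(ℝ≥0, E') | a ≤ rq r ∧ rq r ≤ B f ∧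
        infDist (f (rq r)) (A : Set E') < 1 / (n + 1 : ℝ)} := by
    ext f
    simp only [mem_setOf_eq, mem_iInter, mem_iUnion]
    exact hit_iff A f a (B f) ha
  rw [hset]
  refine MeasurableSet.iInter fun n => MeasurableSet.iUnion fun r => ?_
  exact (MeasurableSet.const _).inter ((measurableSet_le measurable_const hB).inter
    (measurableSet_lt (meas_infDist A _) measurable_const))

/-- last time in `A` before the (rational) time `r`. -/
def sq (r : ℚ) (f : C(ℝ≥0, E')) : ℝ≥0 := sSup {t : ℝ≥0 | t ≤ rq r ∧ f t ∈ A}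

lemma sq_meas (r : ℚ) : Measurable (sq A r) := by
  apply measurable_of_Ioi
  intro c
  have hset : sq A r ⁻¹' Ioi c =
      ⋃ p : ℚ, {f : C(ℝ≥0, E') | c < rq p} ∩
        {f : C(ℝ≥0, E') | ∃ t, rq p ≤ t ∧ t ≤ rq r ∧ f t ∈ A} := by
    ext f
    simp only [mem_preimage, mem_Ioi, mem_iUnion, mem_inter_iff, mem_setOf_eq, sq]
    constructor
    · intro hc
      have hbdd : BddAbove {t : ℝ≥0 | t ≤ rq r ∧ f t ∈ A} := ⟨rq r, fun t ht => ht.1⟩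
      obtain ⟨t, ⟨htr, htA⟩, hct⟩ := (lt_csSup_iff' hbdd).1 hc
      obtain ⟨p, hp1, hp2⟩ := exists_rat_btwn (show (c : ℝ) < (t : ℝ) from hct)
      have hp0 : (0 : ℝ) < (p : ℝ) := lt_of_le_of_lt c.2 hp1
      have hcoe : ((rq p : ℝ≥0) : ℝ) = (p : ℝ) := Real.coe_toNNReal _ hp0.le
      refine ⟨p, ?_, t, ?_, htr, htA⟩
      · rw [← NNReal.coe_lt_coe, hcoe]; exact hp1
      · rw [← NNReal.coe_le_coe, hcoe]; exact hp2.le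
    · rintro ⟨p, hcp, t, hpt, htr, htA⟩
      have hle : t ≤ sSup {t : ℝ≥0 | t ≤ rq r ∧ f t ∈ A} :=
        le_csSup ⟨rq r, fun u hu => hu.1⟩ ⟨htr, htA⟩
      exact lt_of_lt_of_le (lt_of_lt_of_le hcp hpt) hle
  rw [hset]
  exact MeasurableSet.iUnion fun p => (MeasurableSet.const _).inter
    (meas_hit A (rq p) ⟨p, rfl⟩ measurable_const)

/-- The event at rational time `r`: `f` is in `A` at some time up to `r`, and avoids `A`
on `(r, sq r f + 1]`. -/
def Eev (r : ℚ) (f : C(ℝ≥0, E')) : Prop :=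
  (∃ t, 0 ≤ t ∧ t ≤ rq r ∧ f t ∈ A) ∧ ∀ u, rq r < u → u ≤ sq A r f + 1 → f u ∉ A

lemma Eev_meas (r : ℚ) : MeasurableSet {f : C(ℝ≥0, E') | Eev A r f} := by
  have h1 : MeasurableSet {f : C(ℝ≥0, E') | ∃ t, 0 ≤ t ∧ t ≤ rq r ∧ f t ∈ A} :=
    meas_hit A 0 ⟨0, by simp [rq]⟩ measurable_const
  have h2 : MeasurableSet {f : C(ℝ≥0, E') | ∀ u, rq r < u → u ≤ sq A r f + 1 → f u ∉ A} := by
    have heq : {f : C(ℝ≥0, E') | ∀ u, rq r < u → u ≤ sq A r f + 1 → f u ∉ A} =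
        (⋃ p : ℚ, {f : C(ℝ≥0, E') | rq r < rq p} ∩
          {f : C(ℝ≥0, E') | ∃ t, rq p ≤ t ∧ t ≤ sq A r f + 1 ∧ f t ∈ A})ᶜ := by
      ext f
      simp only [mem_setOf_eq, mem_compl_iff, mem_iUnion, mem_inter_iff]
      constructor
      · rintro hgap ⟨p, hrp, t, hpt, hts, htA⟩
        exact hgap t (lt_of_lt_of_le hrp hpt) hts htA
      · intro h u hru hus huA
        obtain ⟨p, hp1, hp2⟩ := exists_rat_btwn (show ((rq r : ℝ≥0) : ℝ) < (u : ℝ) from hru)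
        have hp0 : (0 : ℝ) < (p : ℝ) := lt_of_le_of_lt (rq r).2 hp1
        have hcoe : ((rq p : ℝ≥0) : ℝ) = (p : ℝ) := Real.coe_toNNReal _ hp0.le
        have hrp : rq r < rq p := by rw [← NNReal.coe_lt_coe, hcoe]; exact hp1
        have hpu : rq p ≤ u := by rw [← NNReal.coe_le_coe, hcoe]; exact hp2.le
        exact h ⟨p, hrp, u, hpu, hus, huA⟩
    rw [heq]
    exact (MeasurableSet.iUnion fun p => (MeasurableSet.const _).inter
      (meas_hit A (rq p) ⟨p, rfl⟩ ((sq_meas A r).add_const 1))).compl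
  exact h1.inter h2

open Classical in
/-- candidate value of the hitting time from the rational time `r`. -/
def g (r : ℚ) (f : C(ℝ≥0, E')) : ℝ≥0∞ :=
  if Eev A r f then (sq A r f : ℝ≥0∞) else ⊤

lemma g_meas (r : ℚ) : Measurable (g A r) := by
  unfold g
  exact Measurable.ite (Eev_meas A r)
    (measurable_coe_nnreal_ennreal.comp (sq_meas A r)) measurable_const

omit [MeasurableSpace C(ℝ≥0, EuclideanSpace ℝ (Fin d))]
  [BorelSpace C(ℝ≥0, EuclideanSpace ℝ (Fin d))] in
lemma key (f : C(ℝ≥0, E')) : hittingTime d A ⇑f = ⨅ r : ℚ, g A r f := by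
  unfold hittingTime g
  apply le_antisymm
  · apply le_iInf; intro r
    split_ifs with hE
    · have hbdd : BddAbove {t : ℝ≥0 | t ≤ rq r ∧ f t ∈ A} := ⟨rq r, fun t ht => ht.1⟩
      have hne : Set.Nonempty {t : ℝ≥0 | t ≤ rq r ∧ f t ∈ A} := by
        obtain ⟨t, _, h1, h2⟩ := hE.1; exact ⟨t, h1, h2⟩
      have hcl : IsClosed {t : ℝ≥0 | t ≤ rq r ∧ f t ∈ A} := by
        have hZ : {t : ℝ≥0 | t ≤ rq r ∧ f t ∈ A} = Iic (rq r) ∩ ⇑f ⁻¹' (A : Set E') := by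
          ext t; simp [Set.mem_setOf_eq]
        rw [hZ]
        exact isClosed_Iic.inter ((hAclosed A).preimage f.continuous)
      have hmem : sq A r f ∈ {t : ℝ≥0 | t ≤ rq r ∧ f t ∈ A} := hcl.csSup_mem hne hbdd
      apply sInf_le
      refine ⟨sq A r f, rfl, hmem.2, ?_⟩
      intro u hsu hus
      by_cases hur : u ≤ rq r
      · intro huA
        exact absurd (le_csSup hbdd (⟨hur, huA⟩ :
          u ∈ {t : ℝ≥0 | t ≤ rq r ∧ f t ∈ A})) (not_le.2 hsu)
      · exact hE.2 u (not_le.1 hur) hus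
    · exact le_top
  · apply le_sInf
    rintro x ⟨t, rfl, htA, hgap⟩
    obtain ⟨r, hr1, hr2⟩ := exists_rat_btwn (show (t : ℝ) < (t : ℝ) + 1 by linarith)
    have hr0 : (0 : ℝ) < (r : ℝ) := lt_of_le_of_lt t.2 hr1
    have hcoe : ((rq r : ℝ≥0) : ℝ) = (r : ℝ) := Real.coe_toNNReal _ hr0.le
    have htr : t < rq r := by rw [← NNReal.coe_lt_coe, hcoe]; exact hr1
    have hrt1 : rq r < t + 1 := by
      rw [← NNReal.coe_lt_coe, hcoe]; push_cast; exact hr2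
    have hsq : sq A r f = t := by
      apply le_antisymm
      · refine csSup_le ⟨t, ⟨htr.le, htA⟩⟩ fun u hu => ?_
        by_contra hut
        push_neg at hut
        exact hgap u hut (le_of_lt (lt_of_le_of_lt hu.1 hrt1)) hu.2
      · exact le_csSup ⟨rq r, fun u hu => hu.1⟩ ⟨htr.le, htA⟩
    have hEev : Eev A r f := by
      refine ⟨⟨t, zero_le (a := t), htr.le, htA⟩, ?_⟩
      intro u hru hus
      rw [hsq] at hus
      exact hgap u (lt_trans htr hru) hus
    refine iInf_le_of_le r ?_
    rw [if_pos hEev, hsq]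

end HTAux

/-- `T` is Borel measurable on `C_0^d[0,∞)`. -/
theorem measurable_hittingTime (d : ℕ) (A : Submodule ℝ (EuclideanSpace ℝ (Fin d))) :
    @Measurable {f : C(ℝ≥0, EuclideanSpace ℝ (Fin d)) // f 0 = 0} ℝ≥0∞
      (borel {f : C(ℝ≥0, EuclideanSpace ℝ (Fin d)) // f 0 = 0}) inferInstance
      (fun f => hittingTime d A (fun t => f.1 t)) := by
  letI m1 : MeasurableSpace C(ℝ≥0, EuclideanSpace ℝ (Fin d)) := borel _
  haveI : BorelSpace C(ℝ≥0, EuclideanSpace ℝ (Fin d)) := ⟨rfl⟩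
  letI m2 : MeasurableSpace {f : C(ℝ≥0, EuclideanSpace ℝ (Fin d)) // f 0 = 0} := borel _
  haveI : BorelSpace {f : C(ℝ≥0, EuclideanSpace ℝ (Fin d)) // f 0 = 0} := ⟨rfl⟩
  have hval : Measurable (Subtype.val :
      {f : C(ℝ≥0, EuclideanSpace ℝ (Fin d)) // f 0 = 0} → C(ℝ≥0, EuclideanSpace ℝ (Fin d))) :=
    continuous_subtype_val.measurable
  have heq : (fun f : {f : C(ℝ≥0, EuclideanSpace ℝ (Fin d)) // f 0 = 0} =>
      hittingTime d A (fun t => f.1 t)) = fun f => ⨅ r : ℚ, HTAux.g A r f.1 :=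
    funext fun f => HTAux.key A f.1
  show Measurable fun f : {f : C(ℝ≥0, EuclideanSpace ℝ (Fin d)) // f 0 = 0} =>
    hittingTime d A (fun t => f.1 t)
  rw [heq]
  exact Measurable.iInf fun r => (HTAux.g_meas A r).comp hval
end
end

section
/- Let A be a linear subspace of ℝ^d, T(f) = inf { t : f(t) ∈ A, f(u) ∉ A for all t < u ≤ t+1 } on C_0^d[0,∞). Then T is continuous at every f with T(f) = 0; equivalently, the discontinuity set of T is contained in T^{-1}((0,∞]). -/
open scoped NNReal ENNReal
open Topology

noncomputable section

/-- `T` is continuous (as a map on `C_0^d[0,∞)`, with the topology of uniform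
convergence on compacts) at every `f` with `T(f) = 0`. -/
theorem continuousWithinAt_hittingTime (d : ℕ)
    (A : Submodule ℝ (EuclideanSpace ℝ (Fin d)))
    (f : C(ℝ≥0, EuclideanSpace ℝ (Fin d))) (h0 : f 0 = 0)
    (hT : hittingTime d A (fun t => f t) = 0) :
    ContinuousWithinAt (fun g : C(ℝ≥0, EuclideanSpace ℝ (Fin d)) =>
        hittingTime d A (fun t => g t))
      {g : C(ℝ≥0, EuclideanSpace ℝ (Fin d)) | g 0 = 0} f := by
  have hA : IsClosed (A : Set (EuclideanSpace ℝ (Fin d))) :=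
    Submodule.closed_of_finiteDimensional A
  -- Step 1: f u ∉ A for u ∈ (0,1]
  have key : ∀ u : ℝ≥0, 0 < u → u ≤ 1 → f u ∉ (A : Set (EuclideanSpace ℝ (Fin d))) := by
    intro u hu hu1 hmem
    have hle : (u : ℝ≥0∞) ≤ hittingTime d A (fun t => f t) := by
      apply le_sInf
      rintro x ⟨t, rfl, htA, hnot⟩
      rw [ENNReal.coe_le_coe]
      by_contra hlt
      push_neg at hlt
      exact hnot u hlt (le_trans hu1 le_add_self) hmem
    rw [hT] at hle
    simp only [nonpos_iff_eq_zero, ENNReal.coe_eq_zero] at hle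
    exact hu.ne' hle
  -- Step 2: f u ∉ A for u ∈ (0, 1+η]
  have hopen : IsOpen (f ⁻¹' (A : Set (EuclideanSpace ℝ (Fin d)))ᶜ) :=
    hA.isOpen_compl.preimage f.continuous
  obtain ⟨r, hr, hball⟩ := Metric.isOpen_iff.mp hopen 1 (key 1 one_pos le_rfl)
  obtain ⟨η, hη0, hηr⟩ : ∃ η : ℝ≥0, 0 < η ∧ (η : ℝ) < r := by
    obtain ⟨s, hs0, hsr⟩ := exists_between hr
    exact ⟨⟨s, hs0.le⟩, by exact_mod_cast hs0, hsr⟩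
  have key2 : ∀ u : ℝ≥0, 0 < u → u ≤ 1 + η → f u ∉ (A : Set (EuclideanSpace ℝ (Fin d))) := by
    intro u hu hu1 hmem
    rcases le_or_gt u 1 with h | h
    · exact key u hu h hmem
    · refine hball ?_ hmem
      rw [Metric.mem_ball, NNReal.dist_eq]
      have h1 : (1:ℝ) < u := by exact_mod_cast h
      have h2 : (u:ℝ) ≤ 1 + η := by exact_mod_cast hu1
      push_cast
      rw [abs_of_nonneg (by linarith)]
      linarith
  show Filter.Tendsto _ _ (𝓝 (hittingTime d A (fun t => f t)))
  rw [hT, ENNReal.tendsto_nhds_zero]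
  intro ε₀ hε₀
  -- choose ε
  set c : ℝ≥0∞ := min ε₀ 1 with hc
  have hcne : c ≠ ∞ := ne_top_of_le_ne_top ENNReal.one_ne_top (min_le_right _ _)
  have hcpos : 0 < c := lt_min hε₀ zero_lt_one
  set ε : ℝ≥0 := min c.toNNReal η with hε
  have hεpos : 0 < ε := lt_min (ENNReal.toNNReal_pos hcpos.ne' hcne) hη0
  have hεη : ε ≤ η := min_le_right _ _
  have hεε₀ : (ε : ℝ≥0∞) ≤ ε₀ := by
    calc (ε : ℝ≥0∞) ≤ (c.toNNReal : ℝ≥0∞) := ENNReal.coe_le_coe.mpr (min_le_left _ _)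
    _ = c := ENNReal.coe_toNNReal hcne
    _ ≤ ε₀ := min_le_left _ _
  -- Step 4: positive distance on K = Icc ε (1+ε)
  set K : Set ℝ≥0 := Set.Icc ε (1 + ε) with hK
  have hKc : IsCompact K := isCompact_Icc
  have hKne : K.Nonempty := ⟨ε, le_rfl, le_add_self⟩
  have hcont : ContinuousOn (fun u : ℝ≥0 => Metric.infDist (f u)
      (A : Set (EuclideanSpace ℝ (Fin d)))) K :=
    ((Metric.continuous_infDist_pt _).comp f.continuous).continuousOn
  obtain ⟨u₀, hu₀K, hmin'⟩ := hKc.exists_isMinOn hKne hcont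
  have hmin := hmin'  -- isMinOn
  rw [isMinOn_iff] at hmin
  have hu₀notin : f u₀ ∉ (A : Set (EuclideanSpace ℝ (Fin d))) := by
    refine key2 u₀ (lt_of_lt_of_le hεpos hu₀K.1) ?_
    exact le_trans hu₀K.2 (add_le_add_right hεη 1)
  set δ : ℝ := Metric.infDist (f u₀) (A : Set (EuclideanSpace ℝ (Fin d))) with hδ
  have hδpos : 0 < δ := by
    rw [hδ, ← hA.notMem_iff_infDist_pos ⟨0, A.zero_mem⟩]
    exact hu₀notin
  -- Step 5: eventually close on Icc 0 (1+ε)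
  have htend : TendstoUniformlyOn (fun (g : C(ℝ≥0, EuclideanSpace ℝ (Fin d))) u => g u)
      (fun u => f u) (nhdsWithin f {g : C(ℝ≥0, EuclideanSpace ℝ (Fin d)) | g 0 = 0})
      (Set.Icc 0 (1 + ε)) := by
    have h1 : Filter.Tendsto (id : C(ℝ≥0, EuclideanSpace ℝ (Fin d)) → _)
        (nhdsWithin f {g | g 0 = 0}) (nhds f) := nhdsWithin_le_nhds
    exact (ContinuousMap.tendsto_iff_forall_isCompact_tendstoUniformlyOn.mp h1) _ isCompact_Icc
  have hev1 := (Metric.tendstoUniformlyOn_iff.mp htend) δ hδpos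
  filter_upwards [hev1, eventually_mem_nhdsWithin] with g hg hg0
  -- Step 6: witness t = sSup B
  set B : Set ℝ≥0 := {u | u ≤ ε ∧ g u ∈ (A : Set (EuclideanSpace ℝ (Fin d)))} with hB
  have h0B : (0 : ℝ≥0) ∈ B := ⟨zero_le, by rw [hg0]; exact A.zero_mem⟩
  have hBbdd : BddAbove B := ⟨ε, fun u hu => hu.1⟩
  have hBclosed : IsClosed B := by
    have : B = Set.Iic ε ∩ g ⁻¹' (A : Set (EuclideanSpace ℝ (Fin d))) := rfl
    rw [this]
    exact isClosed_Iic.inter (hA.preimage g.continuous)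
  set t : ℝ≥0 := sSup B with ht
  have htB : t ∈ B := hBclosed.csSup_mem ⟨0, h0B⟩ hBbdd
  have htε : t ≤ ε := csSup_le ⟨0, h0B⟩ fun u hu => hu.1
  have hmemS : (t : ℝ≥0∞) ∈ {x : ℝ≥0∞ | ∃ t' : ℝ≥0, x = (t' : ℝ≥0∞) ∧
      g t' ∈ (A : Set (EuclideanSpace ℝ (Fin d))) ∧
      ∀ u : ℝ≥0, t' < u → u ≤ t' + 1 → g u ∉ (A : Set (EuclideanSpace ℝ (Fin d)))} := by
    refine ⟨t, rfl, htB.2, ?_⟩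
    intro u hu hu1 hmemA
    rcases le_or_gt u ε with h | h
    · exact absurd (le_csSup hBbdd (⟨h, hmemA⟩ : u ∈ B)) (not_le.mpr hu)
    · have hK' : u ∈ K := ⟨h.le, le_trans hu1 (by
        calc t + 1 ≤ ε + 1 := add_le_add_left htε 1
        _ = 1 + ε := add_comm _ _)⟩
      have h1 := hmin u hK'
      have h2 : Metric.infDist (f u) (A : Set (EuclideanSpace ℝ (Fin d))) ≤ dist (f u) (g u) :=
        Metric.infDist_le_dist_of_mem hmemA
      have h3 := hg u ⟨zero_le, hK'.2⟩
      linarith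
  calc hittingTime d A (fun t => g t) ≤ (t : ℝ≥0∞) := sInf_le hmemS
  _ ≤ (ε : ℝ≥0∞) := ENNReal.coe_le_coe.mpr htε
  _ ≤ ε₀ := hεε₀
end
end

section
/- Let Φ(f)(t) = f(T(f)+t) − f(T(f)) with T as above. Then Φ : C_0^d[0,∞) → C_0^d[0,1] is continuous at every f with T(f) = 0. -/
open scoped NNReal ENNReal

noncomputable section

/-- `Φ : C_0^d[0,∞) → C_0^d[0,1]`, `(Φ(f))(t) = f(T(f)+t) − f(T(f))`
(on `{T = ∞}` this uses the convention `∞.toNNReal = 0`). -/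
def PhiMap (d : ℕ) (A : Submodule ℝ (EuclideanSpace ℝ (Fin d)))
    (f : C(ℝ≥0, EuclideanSpace ℝ (Fin d))) :
    C(↥(Set.Icc (0 : ℝ≥0) 1), EuclideanSpace ℝ (Fin d)) :=
  ⟨fun t => f ((hittingTime d A (fun s => f s)).toNNReal + t)
      - f ((hittingTime d A (fun s => f s)).toNNReal),
    ((f.continuous.comp (continuous_const.add continuous_subtype_val)).sub
      continuous_const)⟩

/-- `Φ` is continuous (as a map on `C_0^d[0,∞)`) at every `f` with `T(f) = 0`. -/
theorem continuousWithinAt_PhiMap (d : ℕ)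
    (A : Submodule ℝ (EuclideanSpace ℝ (Fin d)))
    (f : C(ℝ≥0, EuclideanSpace ℝ (Fin d))) (h0 : f 0 = 0)
    (hT : hittingTime d A (fun t => f t) = 0) :
    ContinuousWithinAt (PhiMap d A)
      {g : C(ℝ≥0, EuclideanSpace ℝ (Fin d)) | g 0 = 0} f := by
  classical
  have hAne : (A : Set (EuclideanSpace ℝ (Fin d))).Nonempty := ⟨0, A.zero_mem⟩
  have hA_closed : IsClosed (A : Set (EuclideanSpace ℝ (Fin d))) :=
    Submodule.closed_of_finiteDimensional A
  -- Step 1: f u ∉ A for 0 < u ≤ 1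
  have hP : ∀ u : ℝ≥0, 0 < u → u ≤ 1 →
      f u ∉ (A : Set (EuclideanSpace ℝ (Fin d))) := by
    intro u hu0 hu1 hmem
    have hle : (u : ℝ≥0∞) ≤ hittingTime d A (fun t => f t) := by
      refine le_sInf ?_
      rintro x ⟨t, rfl, htA, hgap⟩
      rw [ENNReal.coe_le_coe]
      by_contra h
      push_neg at h
      exact hgap u h (hu1.trans le_add_self) hmem
    rw [hT] at hle
    simp only [nonpos_iff_eq_zero, ENNReal.coe_eq_zero] at hle
    exact hu0.ne' hle
  -- φ := infDist (f t) A
  have hφc : Continuous (fun t : ℝ≥0 =>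
      Metric.infDist (f t) (A : Set (EuclideanSpace ℝ (Fin d)))) :=
    (Metric.continuous_infDist_pt _).comp f.continuous
  have hφpos : ∀ t : ℝ≥0, f t ∉ (A : Set (EuclideanSpace ℝ (Fin d))) →
      0 < Metric.infDist (f t) (A : Set (EuclideanSpace ℝ (Fin d))) :=
    fun t ht => (hA_closed.notMem_iff_infDist_pos hAne).1 ht
  -- Step 2: ε' with f ∉ A on [1, 1+ε']
  have hev : ∀ᶠ u in nhds (1 : ℝ≥0),
      f u ∉ (A : Set (EuclideanSpace ℝ (Fin d))) := by
    have hop : IsOpen {u : ℝ≥0 | f u ∉ (A : Set (EuclideanSpace ℝ (Fin d)))} := by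
      have : {u : ℝ≥0 | f u ∉ (A : Set (EuclideanSpace ℝ (Fin d)))}
          = (⇑f ⁻¹' (A : Set (EuclideanSpace ℝ (Fin d))))ᶜ := rfl
      rw [this]
      exact (hA_closed.preimage f.continuous).isOpen_compl
    exact hop.mem_nhds (hP 1 one_pos le_rfl)
  obtain ⟨r, hr0, hrball⟩ := Metric.eventually_nhds_iff_ball.mp hev
  set ε' : ℝ≥0 := min (r / 2).toNNReal 1 with hε'def
  have hε'pos : 0 < ε' := lt_min (Real.toNNReal_pos.2 (by linarith)) one_pos
  have hε'le1 : ε' ≤ 1 := min_le_right _ _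
  have hε'r : (ε' : ℝ) ≤ r / 2 := by
    calc (ε' : ℝ) ≤ ((r / 2).toNNReal : ℝ) := NNReal.coe_le_coe.2 (min_le_left _ _)
      _ = r / 2 := Real.coe_toNNReal _ (by linarith)
  have hnotin : ∀ u : ℝ≥0, 0 < u → u ≤ 1 + ε' →
      f u ∉ (A : Set (EuclideanSpace ℝ (Fin d))) := by
    intro u h0u hu
    rcases le_or_gt u 1 with h | h
    · exact hP u h0u h
    · apply hrball
      rw [Metric.mem_ball, NNReal.dist_eq]
      have h1 : (u : ℝ) - 1 ≤ ε' := by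
        have := NNReal.coe_le_coe.2 hu
        push_cast at this
        linarith
      have h2 : (1 : ℝ) ≤ (u : ℝ) := by exact_mod_cast h.le
      rw [abs_of_nonneg (by push_cast; linarith)]
      push_cast
      linarith
  haveI : CompactSpace (Set.Icc (0 : ℝ≥0) 1) :=
    isCompact_iff_compactSpace.mp isCompact_Icc
  haveI : CompactSpace (Set.Icc (0 : ℝ≥0) 2) :=
    isCompact_iff_compactSpace.mp isCompact_Icc
  rw [ContinuousWithinAt, Metric.tendsto_nhds]
  intro ε₀ hε₀
  -- uniform continuity of f on [0,2]
  have hUC : UniformContinuousOn (⇑f) (Set.Icc (0 : ℝ≥0) 2) :=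
    isCompact_Icc.uniformContinuousOn_of_continuous f.continuous.continuousOn
  rw [Metric.uniformContinuousOn_iff] at hUC
  obtain ⟨ζ, hζ0, hζ⟩ := hUC (ε₀ / 5) (by linarith)
  set ε : ℝ≥0 := min ε' (ζ / 2).toNNReal with hεdef
  have hεpos : 0 < ε := lt_min hε'pos (Real.toNNReal_pos.2 (by linarith))
  have hεε' : ε ≤ ε' := min_le_left _ _
  have hεζ : (ε : ℝ) < ζ := by
    have h1 : (ε : ℝ) ≤ ζ / 2 := by
      calc (ε : ℝ) ≤ ((ζ / 2).toNNReal : ℝ) := NNReal.coe_le_coe.2 (min_le_right _ _)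
        _ = ζ / 2 := Real.coe_toNNReal _ (by linarith)
    linarith
  have hεle1 : ε ≤ 1 := hεε'.trans hε'le1
  -- δ from compact [ε, 1+ε']
  have hKne : (Set.Icc ε (1 + ε')).Nonempty :=
    Set.nonempty_Icc.2 (hεle1.trans le_self_add)
  obtain ⟨t₀, ht₀K, ht₀min⟩ := isCompact_Icc.exists_isMinOn hKne hφc.continuousOn
  have hδ'pos : 0 < Metric.infDist (f t₀) (A : Set (EuclideanSpace ℝ (Fin d))) :=
    hφpos t₀ (hnotin t₀ (hεpos.trans_le ht₀K.1) ht₀K.2)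
  set δ : ℝ := min (Metric.infDist (f t₀) (A : Set (EuclideanSpace ℝ (Fin d)))) (ε₀ / 5)
    with hδdef
  have hδpos : 0 < δ := lt_min hδ'pos (by linarith)
  have hδ5 : δ ≤ ε₀ / 5 := min_le_right _ _
  -- neighborhood of f : uniformly δ-close on [0,2]
  have hV : ∀ᶠ g : C(ℝ≥0, EuclideanSpace ℝ (Fin d)) in nhds f,
      ∀ t ∈ Set.Icc (0 : ℝ≥0) 2, dist (g t) (f t) < δ := by
    have hres : ContinuousAt
        (fun g : C(ℝ≥0, EuclideanSpace ℝ (Fin d)) =>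
          g.restrict (Set.Icc (0 : ℝ≥0) 2)) f :=
      (ContinuousMap.continuous_restrict _).continuousAt
    filter_upwards [hres (Metric.ball_mem_nhds _ hδpos)] with g hg t ht
    have h1 := ContinuousMap.dist_apply_le_dist
      (f := g.restrict (Set.Icc (0 : ℝ≥0) 2)) (g := f.restrict (Set.Icc (0 : ℝ≥0) 2))
      (⟨t, ht⟩ : Set.Icc (0 : ℝ≥0) 2)
    rw [ContinuousMap.restrict_apply, ContinuousMap.restrict_apply] at h1
    have h2 : dist (g.restrict (Set.Icc (0 : ℝ≥0) 2))
        (f.restrict (Set.Icc (0 : ℝ≥0) 2)) < δ := by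
      rwa [Set.mem_preimage, Metric.mem_ball] at hg
    linarith
  rw [eventually_nhdsWithin_iff]
  filter_upwards [hV] with g hg hg0
  replace hg0 : g 0 = 0 := hg0
  -- Tg ≤ ε
  set Tg : ℝ≥0 := (hittingTime d A (fun s => g s)).toNNReal with hTgdef
  have hTgle : Tg ≤ ε := by
    set H : Set ℝ≥0 := {t | t ≤ ε ∧ g t ∈ (A : Set (EuclideanSpace ℝ (Fin d)))}
      with hHdef
    have hH0 : (0 : ℝ≥0) ∈ H := ⟨zero_le, by rw [hg0]; exact A.zero_mem⟩
    have hHc : IsClosed H := by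
      have : H = Set.Iic ε ∩ (⇑g ⁻¹' (A : Set (EuclideanSpace ℝ (Fin d)))) := rfl
      rw [this]
      exact isClosed_Iic.inter (hA_closed.preimage g.continuous)
    have hHcpt : IsCompact H :=
      IsCompact.of_isClosed_subset (isCompact_Icc (a := (0:ℝ≥0)) (b := ε)) hHc
        (fun x hx => ⟨zero_le, hx.1⟩)
    have hτmem := hHcpt.sSup_mem ⟨0, hH0⟩
    obtain ⟨hτε, hτA⟩ := hτmem
    have hgap : ∀ u : ℝ≥0, sSup H < u → u ≤ sSup H + 1 →
        g u ∉ (A : Set (EuclideanSpace ℝ (Fin d))) := by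
      intro u hu1 hu2 humem
      rcases le_or_gt u ε with h | h
      · exact absurd (le_csSup hHcpt.bddAbove ⟨h, humem⟩) (not_le.2 hu1)
      · have huK : u ∈ Set.Icc ε (1 + ε') := by
          refine ⟨h.le, ?_⟩
          calc u ≤ sSup H + 1 := hu2
            _ ≤ ε + 1 := add_le_add_left hτε _
            _ ≤ ε' + 1 := add_le_add_left hεε' _
            _ = 1 + ε' := add_comm _ _
        have hu2' : u ∈ Set.Icc (0 : ℝ≥0) 2 := by
          refine ⟨zero_le, huK.2.trans ?_⟩
          calc (1 : ℝ≥0) + ε' ≤ 1 + 1 := add_le_add_right hε'le1 _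
            _ = 2 := by norm_num
        have hd := hg u hu2'
        have hinf : Metric.infDist (f u) (A : Set (EuclideanSpace ℝ (Fin d)))
            ≤ dist (f u) (g u) := Metric.infDist_le_dist_of_mem humem
        have hmin : Metric.infDist (f t₀) (A : Set (EuclideanSpace ℝ (Fin d)))
            ≤ Metric.infDist (f u) (A : Set (EuclideanSpace ℝ (Fin d))) := ht₀min huK
        rw [dist_comm] at hd
        have hδle : δ ≤ Metric.infDist (f t₀) (A : Set (EuclideanSpace ℝ (Fin d))) :=
          min_le_left _ _
        linarith
    have hcand : ((sSup H : ℝ≥0) : ℝ≥0∞) ∈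
        {x : ℝ≥0∞ | ∃ t : ℝ≥0, x = (t : ℝ≥0∞) ∧
          g t ∈ (A : Set (EuclideanSpace ℝ (Fin d))) ∧
          ∀ u : ℝ≥0, t < u → u ≤ t + 1 →
            g u ∉ (A : Set (EuclideanSpace ℝ (Fin d)))} :=
      ⟨sSup H, rfl, hτA, hgap⟩
    have hle : hittingTime d A (fun s => g s) ≤ ((ε : ℝ≥0) : ℝ≥0∞) :=
      (sInf_le hcand).trans (ENNReal.coe_le_coe.2 hτε)
    have := ENNReal.toNNReal_mono ENNReal.coe_ne_top hle
    rwa [ENNReal.toNNReal_coe] at this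
  -- final estimate
  have hTf : (hittingTime d A (fun s => f s)).toNNReal = 0 := by
    rw [show hittingTime d A (fun s => f s) = 0 from hT]
    rfl
  rw [ContinuousMap.dist_lt_iff hε₀]
  intro x
  simp only [PhiMap, ContinuousMap.coe_mk, hTf, zero_add]
  have hx1 : (x : ℝ≥0) ≤ 1 := x.2.2
  have hm1 : (Tg + (x : ℝ≥0)) ∈ Set.Icc (0 : ℝ≥0) 2 := by
    refine ⟨zero_le, ?_⟩
    calc Tg + (x : ℝ≥0) ≤ ε + 1 := add_le_add hTgle hx1
      _ ≤ 1 + 1 := add_le_add_left hεle1 _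
      _ = 2 := by norm_num
  have hm2 : ((x : ℝ≥0)) ∈ Set.Icc (0 : ℝ≥0) 2 :=
    ⟨zero_le, hx1.trans (by norm_num)⟩
  have hm3 : Tg ∈ Set.Icc (0 : ℝ≥0) 2 :=
    ⟨zero_le, hTgle.trans (hεle1.trans (by norm_num))⟩
  have hm4 : (0 : ℝ≥0) ∈ Set.Icc (0 : ℝ≥0) 2 := ⟨le_rfl, by norm_num⟩
  have e1 : dist (g (Tg + (x : ℝ≥0))) (f (Tg + (x : ℝ≥0))) < δ := hg _ hm1
  have e2 : dist (f (Tg + (x : ℝ≥0))) (f (x : ℝ≥0)) < ε₀ / 5 := by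
    refine hζ _ hm1 _ hm2 ?_
    rw [NNReal.dist_eq]
    push_cast
    rw [show (Tg : ℝ) + (x : ℝ) - (x : ℝ) = (Tg : ℝ) by ring,
      abs_of_nonneg Tg.coe_nonneg]
    calc (Tg : ℝ) ≤ (ε : ℝ) := NNReal.coe_le_coe.2 hTgle
      _ < ζ := hεζ
  have e3 : dist (g Tg) (f Tg) < δ := hg _ hm3
  have e4 : dist (f Tg) (f 0) < ε₀ / 5 := by
    refine hζ _ hm3 _ hm4 ?_
    rw [NNReal.dist_eq]
    push_cast
    rw [show (Tg : ℝ) - 0 = (Tg : ℝ) by ring, abs_of_nonneg Tg.coe_nonneg]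
    calc (Tg : ℝ) ≤ (ε : ℝ) := NNReal.coe_le_coe.2 hTgle
      _ < ζ := hεζ
  calc dist (g (Tg + (x : ℝ≥0)) - g Tg) (f (x : ℝ≥0) - f 0)
      ≤ dist (g (Tg + (x : ℝ≥0))) (f (x : ℝ≥0)) + dist (g Tg) (f 0) :=
        dist_sub_sub_le _ _ _ _
    _ ≤ (dist (g (Tg + (x : ℝ≥0))) (f (Tg + (x : ℝ≥0)))
          + dist (f (Tg + (x : ℝ≥0))) (f (x : ℝ≥0)))
        + (dist (g Tg) (f Tg) + dist (f Tg) (f 0)) :=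
        add_le_add (dist_triangle _ _ _) (dist_triangle _ _ _)
    _ < ε₀ := by linarith
end
end

section
/- Let (X_k) be i.i.d. ℤ^d-valued random variables, S_k = X_1 + ⋯ + X_k, and let A be a linear subspace of ℝ^d. Fix n and let T_n = inf { k ≥ 0 : S_k ∈ A and S^{int}_{k+t} ∉ A for all t ∈ (0, n] }, where S^{int} is the linear interpolation of the walk. Assume P(T_n < ∞) = 1. Then for all Borel sets B_1, …, B_n ⊆ ℝ^d: P(S_{T_n+k} − S_{T_n} ∈ B_k, k = 1,…,n) = P(S_k ∈ B_k, k = 1,…,n | S^{int}_t ∉ A for all t ∈ (0,n]). -/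
open scoped NNReal ENNReal
open MeasureTheory ProbabilityTheory

noncomputable section

/-- Partial sums `S_k = X_1 + ⋯ + X_k` (here `X` is indexed from `0`). -/
def walk {Ω : Type*} (d : ℕ) (X : ℕ → Ω → EuclideanSpace ℝ (Fin d)) (k : ℕ)
    (ω : Ω) : EuclideanSpace ℝ (Fin d) :=
  ∑ i ∈ Finset.range k, X i ω

/-- Linearly interpolated trajectory `S^{int}_t`. -/
def walkInt {Ω : Type*} (d : ℕ) (X : ℕ → Ω → EuclideanSpace ℝ (Fin d)) (t : ℝ)
    (ω : Ω) : EuclideanSpace ℝ (Fin d) :=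
  walk d X ⌊t⌋₊ ω + (t - ⌊t⌋₊) • X ⌊t⌋₊ ω

/-- `T_n(ω)`'s defining set: `{k : S_k ∈ A, S^{int}_{k+t} ∉ A for t ∈ (0,n]}`. -/
def TnSet {Ω : Type*} (d n : ℕ) (A : Submodule ℝ (EuclideanSpace ℝ (Fin d)))
    (X : ℕ → Ω → EuclideanSpace ℝ (Fin d)) (ω : Ω) : Set ℕ :=
  {k : ℕ | walk d X k ω ∈ (A : Set (EuclideanSpace ℝ (Fin d))) ∧
    ∀ t : ℝ, (k : ℝ) < t → t ≤ (k : ℝ) + n →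
      walkInt d X t ω ∉ (A : Set (EuclideanSpace ℝ (Fin d)))}

namespace BolthausenAux

variable {Ω : Type*} {Ω' : Type*}

theorem walk_congr (d : ℕ) {X : ℕ → Ω → EuclideanSpace ℝ (Fin d)}
    {X' : ℕ → Ω' → EuclideanSpace ℝ (Fin d)} {ω : Ω} {ω' : Ω'} {k : ℕ}
    (h : ∀ i < k, X i ω = X' i ω') : walk d X k ω = walk d X' k ω' :=
  Finset.sum_congr rfl fun i hi => h i (Finset.mem_range.1 hi)

theorem walkInt_natCast (d : ℕ) (X : ℕ → Ω → EuclideanSpace ℝ (Fin d)) (m : ℕ) (ω : Ω) :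
    walkInt d X (m : ℝ) ω = walk d X m ω := by
  simp [walkInt]

theorem walkInt_congr (d : ℕ) {X : ℕ → Ω → EuclideanSpace ℝ (Fin d)}
    {X' : ℕ → Ω' → EuclideanSpace ℝ (Fin d)} {ω : Ω} {ω' : Ω'} {t : ℝ}
    {m : ℕ} (ht0 : 0 ≤ t) (htm : t ≤ m) (h : ∀ i < m, X i ω = X' i ω') :
    walkInt d X t ω = walkInt d X' t ω' := by
  have hfl : ⌊t⌋₊ ≤ m := by
    have := Nat.floor_le_floor htm
    simpa using this
  rcases lt_or_eq_of_le hfl with hlt | heq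
  · unfold walkInt
    rw [walk_congr d (fun i hi => h i (hi.trans hlt)), h _ hlt]
  · have htm' : (m : ℝ) ≤ t := by rw [← heq]; exact_mod_cast Nat.floor_le ht0
    have ht : t = (m : ℝ) := le_antisymm htm htm'
    subst ht
    rw [walkInt_natCast, walkInt_natCast]
    exact walk_congr d h

theorem walk_shift (d : ℕ) (X : ℕ → Ω → EuclideanSpace ℝ (Fin d)) (m j : ℕ) (ω : Ω) :
    walk d X (m + j) ω = walk d X m ω + walk d (fun i => X (m + i)) j ω := by
  simp only [walk]
  exact Finset.sum_range_add (fun i => X i ω) m j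

theorem walkInt_shift (d : ℕ) (X : ℕ → Ω → EuclideanSpace ℝ (Fin d)) (m : ℕ) {s : ℝ}
    (hs : 0 ≤ s) (ω : Ω) :
    walkInt d X ((m : ℝ) + s) ω = walk d X m ω + walkInt d (fun i => X (m + i)) s ω := by
  have hfl : ⌊(m : ℝ) + s⌋₊ = m + ⌊s⌋₊ := by
    rw [add_comm ((m : ℝ)) s, Nat.floor_add_natCast hs, add_comm]
  have hc : ((m : ℝ) + s) - ((m + ⌊s⌋₊ : ℕ) : ℝ) = s - (⌊s⌋₊ : ℝ) := by push_cast; ring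
  simp only [walkInt, hfl, walk_shift d X m ⌊s⌋₊ ω, hc]
  abel

/-- Lattice points, as a countable subset of `Fin m → EuclideanSpace ℝ (Fin d)`. -/
def lat (d m : ℕ) : Set (Fin m → EuclideanSpace ℝ (Fin d)) :=
  Set.range fun (z : Fin m → Fin d → ℤ) (i : Fin m) =>
    (WithLp.equiv 2 (Fin d → ℝ)).symm fun j => (z i j : ℝ)

theorem lat_countable (d m : ℕ) : (lat d m).Countable := Set.countable_range _

theorem mem_lat {d m : ℕ} {X' : ℕ → Ω → EuclideanSpace ℝ (Fin d)}
    (hint : ∀ k ω i, ∃ z : ℤ, X' k ω i = (z : ℝ)) (ω : Ω) :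
    (fun i : Fin m => X' i ω) ∈ lat d m := by
  refine ⟨fun i j => (hint i ω j).choose, ?_⟩
  funext i
  rw [Equiv.symm_apply_eq]
  funext j
  change _ = (X' (i : ℕ) ω).ofLp j
  exact ((hint (i : ℕ) ω j).choose_spec).symm

theorem meas_event {d : ℕ} [MeasurableSpace Ω] {X' : ℕ → Ω → EuclideanSpace ℝ (Fin d)}
    (hm : ∀ i, Measurable (X' i)) (hint : ∀ k ω i, ∃ z : ℤ, X' k ω i = (z : ℝ)) (m : ℕ)
    (P : (Fin m → EuclideanSpace ℝ (Fin d)) → Prop) :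
    MeasurableSet {ω | P fun i : Fin m => X' i ω} := by
  have hC : MeasurableSet ({v : Fin m → EuclideanSpace ℝ (Fin d) | P v} ∩ lat d m) :=
    (Set.Countable.mono Set.inter_subset_right (lat_countable d m)).measurableSet
  have hvec : Measurable fun ω (i : Fin m) => X' i ω :=
    measurable_pi_lambda _ fun i => hm i
  have he : {ω | P fun i : Fin m => X' i ω}
      = (fun ω (i : Fin m) => X' i ω) ⁻¹' ({v | P v} ∩ lat d m) := by
    ext ω
    simp only [Set.mem_setOf_eq, Set.mem_preimage, Set.mem_inter_iff]
    exact ⟨fun h => ⟨h, mem_lat hint ω⟩, fun h => h.1⟩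
  rw [he]; exact hvec hC

theorem map_block {d : ℕ} [MeasurableSpace Ω] {μ : Measure Ω} [IsProbabilityMeasure μ]
    {X : ℕ → Ω → EuclideanSpace ℝ (Fin d)}
    (hXmeas : ∀ k, Measurable (X k))
    (hindep : iIndepFun X μ)
    (hident : ∀ k, IdentDistrib (X k) (X 0) μ μ) (m q : ℕ) :
    μ.map (fun ω (i : Fin q) => X (m + i) ω)
      = Measure.pi fun _ : Fin q => μ.map (X 0) := by
  classical
  haveI : IsProbabilityMeasure (μ.map (X 0)) :=
    Measure.isProbabilityMeasure_map (hXmeas 0).aemeasurable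
  refine (Measure.pi_eq fun s hs => ?_).symm
  set sets : ℕ → Set (EuclideanSpace ℝ (Fin d)) :=
    fun k => if h : k - m < q ∧ m ≤ k then s ⟨k - m, h.1⟩ else Set.univ with hsets_def
  have hvec : Measurable (fun ω (i : Fin q) => X (m + i) ω) :=
    measurable_pi_lambda _ fun i => hXmeas _
  have hsetseq : ∀ i : Fin q, sets (m + (i : ℕ)) = s i := by
    intro i
    rw [hsets_def]
    show (if h : (m + (i : ℕ)) - m < q ∧ m ≤ m + (i : ℕ)
      then s ⟨(m + (i : ℕ)) - m, h.1⟩ else Set.univ) = s i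
    have hcond : (m + (i : ℕ)) - m < q ∧ m ≤ m + (i : ℕ) := ⟨by omega, by omega⟩
    have hfe : (⟨(m + (i : ℕ)) - m, hcond.1⟩ : Fin q) = i := Fin.ext (by simp)
    rw [dif_pos hcond, hfe]
  rw [Measure.map_apply hvec (MeasurableSet.univ_pi hs)]
  have hpre : (fun ω (i : Fin q) => X (m + i) ω) ⁻¹' Set.pi Set.univ s
      = ⋂ k ∈ Finset.image (fun i : Fin q => m + (i : ℕ)) Finset.univ, X k ⁻¹' sets k := by
    ext ω
    simp only [Set.mem_preimage, Set.mem_pi, Set.mem_univ, forall_true_left, Set.mem_iInter,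
      Finset.mem_image, Finset.mem_univ, true_and]
    constructor
    · rintro h k ⟨i, rfl⟩
      rw [hsetseq i]; exact h i
    · intro h i
      have := h (m + (i : ℕ)) ⟨i, rfl⟩
      rwa [hsetseq i] at this
  rw [hpre,
    hindep.measure_inter_preimage_eq_mul (Finset.image (fun i : Fin q => m + (i : ℕ)) Finset.univ)
      (fun k _ => by
        rw [hsets_def]
        show MeasurableSet (if h : k - m < q ∧ m ≤ k then s ⟨k - m, h.1⟩ else Set.univ)
        split_ifs with h
        exacts [hs _, MeasurableSet.univ]),
    Finset.prod_image (fun a _ b _ hab => Fin.ext (by omega))]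
  refine Finset.prod_congr rfl fun i _ => ?_
  rw [hsetseq i, ← Measure.map_apply (hXmeas _) (hs i), (hident (m + (i : ℕ))).map_eq]

theorem prob_block_shift {d : ℕ} [MeasurableSpace Ω] {μ : Measure Ω} [IsProbabilityMeasure μ]
    {X : ℕ → Ω → EuclideanSpace ℝ (Fin d)}
    (hXmeas : ∀ k, Measurable (X k))
    (hXint : ∀ k ω i, ∃ z : ℤ, X k ω i = (z : ℝ))
    (hindep : iIndepFun X μ)
    (hident : ∀ k, IdentDistrib (X k) (X 0) μ μ) (m q : ℕ)
    (P : (Fin q → EuclideanSpace ℝ (Fin d)) → Prop) :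
    μ {ω | P fun i : Fin q => X (m + i) ω} = μ {ω | P fun i : Fin q => X i ω} := by
  classical
  set C : Set (Fin q → EuclideanSpace ℝ (Fin d)) := {v | P v} ∩ lat d q with hCdef
  have hCm : MeasurableSet C :=
    (Set.Countable.mono Set.inter_subset_right (lat_countable d q)).measurableSet
  have h1 : ∀ m' : ℕ, {ω | P fun i : Fin q => X (m' + i) ω}
      = (fun ω (i : Fin q) => X (m' + i) ω) ⁻¹' C := by
    intro m'
    ext ω
    simp only [Set.mem_setOf_eq, Set.mem_preimage, hCdef, Set.mem_inter_iff]
    exact ⟨fun h => ⟨h, mem_lat (fun k ω' j => hXint (m' + k) ω' j) ω⟩, fun h => h.1⟩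
  have h2 : {ω | P fun i : Fin q => X i ω} = {ω | P fun i : Fin q => X (0 + i) ω} := by
    simp only [Nat.zero_add]
  have hv : ∀ m' : ℕ, Measurable (fun ω (i : Fin q) => X (m' + i) ω) :=
    fun m' => measurable_pi_lambda _ fun i => hXmeas _
  rw [h1 m, h2, h1 0, ← Measure.map_apply (hv m) hCm, ← Measure.map_apply (hv 0) hCm,
    map_block hXmeas hindep hident m q, map_block hXmeas hindep hident 0 q]

theorem prob_inter_block {d : ℕ} [MeasurableSpace Ω] {μ : Measure Ω} [IsProbabilityMeasure μ]
    {X : ℕ → Ω → EuclideanSpace ℝ (Fin d)}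
    (hXmeas : ∀ k, Measurable (X k))
    (hXint : ∀ k ω i, ∃ z : ℤ, X k ω i = (z : ℝ))
    (hindep : iIndepFun X μ) (m q : ℕ)
    (Pf : (Fin m → EuclideanSpace ℝ (Fin d)) → Prop)
    (Pg : (Fin q → EuclideanSpace ℝ (Fin d)) → Prop) :
    μ ({ω | Pf fun i : Fin m => X i ω} ∩ {ω | Pg fun i : Fin q => X (m + i) ω})
      = μ {ω | Pf fun i : Fin m => X i ω} * μ {ω | Pg fun i : Fin q => X (m + i) ω} := by
  classical
  have hST : Disjoint (Finset.range m)
      (Finset.image (fun i : Fin q => m + (i : ℕ)) Finset.univ) := by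
    rw [Finset.disjoint_left]
    intro a ha hb
    rw [Finset.mem_range] at ha
    rw [Finset.mem_image] at hb
    obtain ⟨i, _, rfl⟩ := hb
    omega
  have hIF := hindep.indepFun_finset (Finset.range m)
    (Finset.image (fun i : Fin q => m + (i : ℕ)) Finset.univ) hST hXmeas
  set Cf : Set (Fin m → EuclideanSpace ℝ (Fin d)) := {v | Pf v} ∩ lat d m with hCfdef
  set Cg : Set (Fin q → EuclideanSpace ℝ (Fin d)) := {v | Pg v} ∩ lat d q with hCgdef
  have hCfm : MeasurableSet Cf :=
    (Set.Countable.mono Set.inter_subset_right (lat_countable d m)).measurableSet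
  have hCgm : MeasurableSet Cg :=
    (Set.Countable.mono Set.inter_subset_right (lat_countable d q)).measurableSet
  set rS : ((k : (Finset.range m : Finset ℕ)) → EuclideanSpace ℝ (Fin d))
      → Fin m → EuclideanSpace ℝ (Fin d) :=
    fun v i => v ⟨(i : ℕ), Finset.mem_range.2 i.isLt⟩ with hrSdef
  set rT : ((k : (Finset.image (fun i : Fin q => m + (i : ℕ)) Finset.univ : Finset ℕ))
        → EuclideanSpace ℝ (Fin d)) → Fin q → EuclideanSpace ℝ (Fin d) :=
    fun v i => v ⟨m + (i : ℕ), Finset.mem_image.2 ⟨i, Finset.mem_univ i, rfl⟩⟩ with hrTdef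
  have hrS : Measurable rS := measurable_pi_lambda _ fun i => measurable_pi_apply _
  have hrT : Measurable rT := measurable_pi_lambda _ fun i => measurable_pi_apply _
  have key := hIF.measure_inter_preimage_eq_mul (rS ⁻¹' Cf) (rT ⁻¹' Cg) (hrS hCfm) (hrT hCgm)
  have e1 : {ω | Pf fun i : Fin m => X i ω}
      = (fun a (i : (Finset.range m : Finset ℕ)) => X i a) ⁻¹' (rS ⁻¹' Cf) := by
    ext ω
    simp only [Set.mem_setOf_eq, Set.mem_preimage, hCfdef, Set.mem_inter_iff]
    exact ⟨fun h => ⟨h, mem_lat hXint ω⟩, fun h => h.1⟩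
  have e2 : {ω | Pg fun i : Fin q => X (m + i) ω}
      = (fun a (i : (Finset.image (fun i : Fin q => m + (i : ℕ)) Finset.univ : Finset ℕ)) =>
          X i a) ⁻¹' (rT ⁻¹' Cg) := by
    ext ω
    simp only [Set.mem_setOf_eq, Set.mem_preimage, hCgdef, Set.mem_inter_iff]
    exact ⟨fun h => ⟨h, mem_lat (fun k ω' j => hXint (m + k) ω' j) ω⟩, fun h => h.1⟩
  rw [e1, e2]
  exact key

/-- Values on `Unit` built from a finite vector, extended by `0`. -/
def vX (d m : ℕ) (v : Fin m → EuclideanSpace ℝ (Fin d)) : ℕ → Unit → EuclideanSpace ℝ (Fin d) :=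
  fun i _ => if h : i < m then v ⟨i, h⟩ else 0

def PFdef (d n m : ℕ) (A : Submodule ℝ (EuclideanSpace ℝ (Fin d)))
    (v : Fin m → EuclideanSpace ℝ (Fin d)) : Prop :=
  walk d (vX d m v) m () ∈ (A : Set (EuclideanSpace ℝ (Fin d))) ∧
  ∀ k, k + n < m → ¬(walk d (vX d m v) k () ∈ (A : Set (EuclideanSpace ℝ (Fin d))) ∧
    ∀ t : ℝ, (k : ℝ) < t → t ≤ (k : ℝ) + n →
      walkInt d (vX d m v) t () ∉ (A : Set (EuclideanSpace ℝ (Fin d))))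

def PGdef (d n : ℕ) (A : Submodule ℝ (EuclideanSpace ℝ (Fin d)))
    (v : Fin n → EuclideanSpace ℝ (Fin d)) : Prop :=
  ∀ s : ℝ, 0 < s → s ≤ (n : ℝ) → walkInt d (vX d n v) s () ∉ (A : Set (EuclideanSpace ℝ (Fin d)))

def PHdef (d n : ℕ) (B : Fin n → Set (EuclideanSpace ℝ (Fin d)))
    (v : Fin n → EuclideanSpace ℝ (Fin d)) : Prop :=
  ∀ k : Fin n, walk d (vX d n v) ((k : ℕ) + 1) () ∈ B k

theorem walk_vX (d m : ℕ) (X' : ℕ → Ω → EuclideanSpace ℝ (Fin d)) (ω : Ω) {k : ℕ}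
    (hk : k ≤ m) :
    walk d (vX d m fun j : Fin m => X' j ω) k () = walk d X' k ω := by
  refine walk_congr d fun i hi => ?_
  simp [vX, show i < m from lt_of_lt_of_le hi hk]

theorem walkInt_vX (d m : ℕ) (X' : ℕ → Ω → EuclideanSpace ℝ (Fin d)) (ω : Ω) {t : ℝ}
    (h0 : 0 ≤ t) (hm : t ≤ (m : ℝ)) :
    walkInt d (vX d m fun j : Fin m => X' j ω) t () = walkInt d X' t ω := by
  refine walkInt_congr d h0 hm fun i hi => ?_
  simp [vX, hi]

theorem PG_iff (d n : ℕ) (A : Submodule ℝ (EuclideanSpace ℝ (Fin d)))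
    (X' : ℕ → Ω → EuclideanSpace ℝ (Fin d)) (ω : Ω) :
    PGdef d n A (fun i : Fin n => X' i ω) ↔
      ∀ s : ℝ, 0 < s → s ≤ (n : ℝ) → walkInt d X' s ω ∉ (A : Set (EuclideanSpace ℝ (Fin d))) := by
  unfold PGdef
  refine forall_congr' fun s => imp_congr_right fun h1 => imp_congr_right fun h2 => not_congr ?_
  rw [walkInt_vX d n X' ω h1.le h2]

theorem PH_iff (d n : ℕ) (B : Fin n → Set (EuclideanSpace ℝ (Fin d)))
    (X' : ℕ → Ω → EuclideanSpace ℝ (Fin d)) (ω : Ω) :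
    PHdef d n B (fun i : Fin n => X' i ω) ↔
      ∀ k : Fin n, walk d X' ((k : ℕ) + 1) ω ∈ B k := by
  unfold PHdef
  refine forall_congr' fun k => ?_
  rw [walk_vX d n X' ω (Nat.succ_le_of_lt k.isLt)]

theorem PF_iff (d n m : ℕ) (A : Submodule ℝ (EuclideanSpace ℝ (Fin d)))
    (X' : ℕ → Ω → EuclideanSpace ℝ (Fin d)) (ω : Ω) :
    PFdef d n m A (fun i : Fin m => X' i ω) ↔
      (walk d X' m ω ∈ (A : Set (EuclideanSpace ℝ (Fin d))) ∧ ∀ k, k + n < m →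
        ¬(walk d X' k ω ∈ (A : Set (EuclideanSpace ℝ (Fin d))) ∧
          ∀ t : ℝ, (k : ℝ) < t → t ≤ (k : ℝ) + n →
            walkInt d X' t ω ∉ (A : Set (EuclideanSpace ℝ (Fin d))))) := by
  unfold PFdef
  rw [walk_vX d m X' ω le_rfl]
  refine and_congr_right fun _ =>
    forall_congr' fun k => imp_congr_right fun hk => not_congr (and_congr ?_ ?_)
  · rw [walk_vX d m X' ω (by omega)]
  · refine forall_congr' fun t =>
      imp_congr_right fun h1 => imp_congr_right fun h2 => not_congr ?_
    have h0 : (0 : ℝ) ≤ t := le_trans (Nat.cast_nonneg k) h1.le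
    have hm' : t ≤ (m : ℝ) := by
      have hc : ((k + n : ℕ) : ℝ) ≤ (m : ℝ) := Nat.cast_le.2 (by omega)
      push_cast at hc
      linarith
    rw [walkInt_vX d m X' ω h0 hm']

end BolthausenAux

open BolthausenAux

/-- Bolthausen-type equation: the post-`T_n` increments of the walk have the law
of the walk conditioned to avoid `A` (via its interpolated trajectory) on `(0,n]`. -/
theorem bolthausen_equation {Ω : Type*} [MeasurableSpace Ω] (μ : Measure Ω)
    [IsProbabilityMeasure μ] (d n : ℕ)
    (A : Submodule ℝ (EuclideanSpace ℝ (Fin d)))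
    (X : ℕ → Ω → EuclideanSpace ℝ (Fin d))
    (hXmeas : ∀ k, Measurable (X k))
    (hXint : ∀ k ω i, ∃ m : ℤ, X k ω i = (m : ℝ))
    (hindep : iIndepFun X μ)
    (hident : ∀ k, IdentDistrib (X k) (X 0) μ μ)
    (hfin : ∀ᵐ ω ∂μ, (TnSet d n A X ω).Nonempty)
    (hpos : μ {ω | ∀ t : ℝ, 0 < t → t ≤ (n : ℝ) →
      walkInt d X t ω ∉ (A : Set (EuclideanSpace ℝ (Fin d)))} ≠ 0)
    (B : Fin n → Set (EuclideanSpace ℝ (Fin d)))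
    (hB : ∀ k, MeasurableSet (B k)) :
    (μ[|{ω | ∀ t : ℝ, 0 < t → t ≤ (n : ℝ) →
        walkInt d X t ω ∉ (A : Set (EuclideanSpace ℝ (Fin d)))}])
      {ω | ∀ k : Fin n, walk d X ((k : ℕ) + 1) ω ∈ B k} =
    μ {ω | ∀ k : Fin n,
        walk d X (sInf (TnSet d n A X ω) + (k : ℕ) + 1) ω
          - walk d X (sInf (TnSet d n A X ω)) ω ∈ B k} := by
  classical
  -- Notation for the various events
  set Av : Set Ω := {ω | ∀ t : ℝ, 0 < t → t ≤ (n : ℝ) →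
      walkInt d X t ω ∉ (A : Set (EuclideanSpace ℝ (Fin d)))} with hAvdef
  set Bev : Set Ω := {ω | ∀ k : Fin n, walk d X ((k : ℕ) + 1) ω ∈ B k} with hBevdef
  set R : Set Ω := {ω | ∀ k : Fin n,
      walk d X (sInf (TnSet d n A X ω) + (k : ℕ) + 1) ω
        - walk d X (sInf (TnSet d n A X ω)) ω ∈ B k} with hRdef
  set Teq : ℕ → Set Ω := fun m =>
    {ω | m ∈ TnSet d n A X ω ∧ ∀ k < m, k ∉ TnSet d n A X ω} with hTeqdef
  -- characterization of membership in `TnSet` at `m` via shifted walk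
  have hTn_iff : ∀ (m : ℕ) (ω : Ω), m ∈ TnSet d n A X ω ↔
      (walk d X m ω ∈ (A : Set (EuclideanSpace ℝ (Fin d))) ∧
        PGdef d n A fun i : Fin n => X (m + i) ω) := by
    intro m ω
    rw [PG_iff d n A (fun i => X (m + i)) ω]
    constructor
    · rintro ⟨h1, h2⟩
      refine ⟨h1, fun s hs0 hsn hmem => ?_⟩
      have h2' := h2 ((m : ℝ) + s) (by linarith) (by linarith)
      rw [walkInt_shift d X m hs0.le ω] at h2'
      exact h2' (A.add_mem h1 hmem)
    · rintro ⟨h1, h2⟩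
      refine ⟨h1, fun t ht1 ht2 hmem => ?_⟩
      have hs0 : (0 : ℝ) < t - m := by linarith
      have hsn : t - m ≤ (n : ℝ) := by linarith
      have he : (m : ℝ) + (t - m) = t := by ring
      have hsh := walkInt_shift d X m hs0.le ω
      rw [he] at hsh
      have h3 : walkInt d (fun i => X (m + i)) (t - m) ω
          = walkInt d X t ω - walk d X m ω := by rw [hsh]; abel
      exact h2 (t - m) hs0 hsn (by rw [h3]; exact A.sub_mem hmem h1)
  -- decomposition of `Teq m`
  have hTeq : ∀ m : ℕ, Teq m
      = {ω | PFdef d n m A fun i : Fin m => X i ω}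
        ∩ {ω | PGdef d n A fun i : Fin n => X (m + i) ω} := by
    intro m
    ext ω
    simp only [hTeqdef, Set.mem_setOf_eq, Set.mem_inter_iff]
    rw [PF_iff d n m A X ω, hTn_iff m ω]
    constructor
    · rintro ⟨⟨h1, hG⟩, h2⟩
      exact ⟨⟨h1, fun k hk => h2 k (by omega)⟩, hG⟩
    · rintro ⟨⟨h1, h2⟩, hG⟩
      refine ⟨⟨h1, hG⟩, fun k hk hmem => ?_⟩
      by_cases hkn : k + n < m
      · exact h2 k hkn hmem
      · have hm1 : ((k : ℕ) : ℝ) < (m : ℝ) := by exact_mod_cast hk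
        have hm2 : ((m : ℕ) : ℝ) ≤ (k : ℝ) + n := by
          have : (m : ℕ) ≤ k + n := by omega
          exact_mod_cast this
        have := hmem.2 (m : ℝ) hm1 hm2
        rw [walkInt_natCast] at this
        exact this h1
  -- integrality of shifted families
  have hXint' : ∀ m : ℕ, ∀ k ω i, ∃ z : ℤ, X (m + k) ω i = (z : ℝ) :=
    fun m k ω i => hXint (m + k) ω i
  -- measurability of the pieces
  have hTeqMeas : ∀ m, MeasurableSet (Teq m) := by
    intro m
    rw [hTeq m]
    exact (meas_event hXmeas hXint m (PFdef d n m A)).inter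
      (meas_event (fun i => hXmeas (m + i)) (hXint' m) n (PGdef d n A))
  -- `Teq` partitions the set where `TnSet` is nonempty
  have hU : (⋃ m, Teq m) = {ω | (TnSet d n A X ω).Nonempty} := by
    ext ω
    simp only [Set.mem_iUnion, hTeqdef, Set.mem_setOf_eq]
    constructor
    · rintro ⟨m, hm, -⟩; exact ⟨m, hm⟩
    · rintro h
      exact ⟨sInf (TnSet d n A X ω), Nat.sInf_mem h,
        fun k hk => Nat.notMem_of_lt_sInf hk⟩
  have hdisj : Pairwise (Function.onFun Disjoint Teq) := by
    intro a b hab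
    rw [Function.onFun, Set.disjoint_left]
    rintro ω ⟨ha1, ha2⟩ ⟨hb1, hb2⟩
    rcases lt_or_gt_of_ne hab with h | h
    · exact hb2 a h ha1
    · exact ha2 b h hb1
  have hsInf : ∀ m ω, ω ∈ Teq m → sInf (TnSet d n A X ω) = m := by
    rintro m ω ⟨h1, h2⟩
    refine le_antisymm (Nat.sInf_le h1) ?_
    by_contra h
    push_neg at h
    exact h2 _ h (Nat.sInf_mem ⟨m, h1⟩)
  -- on `Teq m`, the event `R` is the shifted `B`-event
  have hRiff : ∀ m ω, ω ∈ Teq m →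
      (ω ∈ R ↔ PHdef d n B fun i : Fin n => X (m + i) ω) := by
    intro m ω hω
    have hs := hsInf m ω hω
    rw [PH_iff d n B (fun i => X (m + i)) ω]
    have hdiff : ∀ k : Fin n, walk d X (m + (k : ℕ) + 1) ω - walk d X m ω
        = walk d (fun i => X (m + i)) ((k : ℕ) + 1) ω := by
      intro k
      rw [add_assoc, walk_shift d X m ((k : ℕ) + 1) ω]
      abel
    constructor
    · intro h k
      have := h k
      rw [hs, hdiff k] at this
      exact this
    · intro h k
      have := h k
      rw [← hdiff k] at this
      simp only [hRdef, Set.mem_setOf_eq] at *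
      rw [hs]
      exact this
  have hRdec : ∀ m : ℕ, R ∩ Teq m
      = {ω | PFdef d n m A fun i : Fin m => X i ω}
        ∩ {ω | (PGdef d n A fun i : Fin n => X (m + i) ω)
            ∧ (PHdef d n B fun i : Fin n => X (m + i) ω)} := by
    intro m
    ext ω
    simp only [Set.mem_inter_iff, Set.mem_setOf_eq]
    constructor
    · rintro ⟨hR1, hT⟩
      have hT' : ω ∈ ({ω | PFdef d n m A fun i : Fin m => X i ω}
          ∩ {ω | PGdef d n A fun i : Fin n => X (m + i) ω}) := (hTeq m) ▸ hT
      exact ⟨hT'.1, hT'.2, (hRiff m ω hT).mp hR1⟩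
    · rintro ⟨hPFω, hPGω, hPHω⟩
      have hT : ω ∈ Teq m := by rw [hTeq m]; exact ⟨hPFω, hPGω⟩
      exact ⟨(hRiff m ω hT).mpr hPHω, hT⟩
  -- key factorization
  have hKey : ∀ (m : ℕ) (Pf : (Fin m → EuclideanSpace ℝ (Fin d)) → Prop)
      (Pg : (Fin n → EuclideanSpace ℝ (Fin d)) → Prop),
      μ ({ω | Pf fun i : Fin m => X i ω} ∩ {ω | Pg fun i : Fin n => X (m + i) ω})
        = μ {ω | Pf fun i : Fin m => X i ω} * μ {ω | Pg fun i : Fin n => X i ω} := by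
    intro m Pf Pg
    rw [prob_inter_block hXmeas hXint hindep m n Pf Pg,
      prob_block_shift hXmeas hXint hindep hident m n Pg]
  -- identification of the conditioning event and the `B`-event
  have hAvPG : Av = {ω | PGdef d n A fun i : Fin n => X i ω} := by
    ext ω
    rw [hAvdef]
    simp only [Set.mem_setOf_eq]
    exact (PG_iff d n A X ω).symm
  have hBevPH : Bev = {ω | PHdef d n B fun i : Fin n => X i ω} := by
    ext ω
    rw [hBevdef]
    simp only [Set.mem_setOf_eq]
    exact (PH_iff d n B X ω).symm
  have hAvBev : Av ∩ Bev = {ω | (PGdef d n A fun i : Fin n => X i ω)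
      ∧ (PHdef d n B fun i : Fin n => X i ω)} := by
    rw [hAvPG, hBevPH]
    ext ω
    simp [Set.mem_inter_iff, Set.mem_setOf_eq]
  -- measure computations
  have hμTeq : ∀ m, μ (Teq m)
      = μ {ω | PFdef d n m A fun i : Fin m => X i ω} * μ Av := by
    intro m
    rw [hTeq m, hKey m _ (PGdef d n A), hAvPG]
  have hμRTeq : ∀ m, μ (R ∩ Teq m)
      = μ {ω | PFdef d n m A fun i : Fin m => X i ω} * μ (Av ∩ Bev) := by
    intro m
    rw [hRdec m, hKey m _ (fun v => (PGdef d n A v) ∧ (PHdef d n B v)), hAvBev]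
  -- total mass of the partition
  have hUmeas : MeasurableSet (⋃ m, Teq m) := MeasurableSet.iUnion hTeqMeas
  have hcompl : μ (⋃ m, Teq m)ᶜ = 0 := by
    have h0 : μ {ω | ¬(TnSet d n A X ω).Nonempty} = 0 := by
      exact ae_iff.1 hfin
    have : (⋃ m, Teq m)ᶜ = {ω | ¬(TnSet d n A X ω).Nonempty} := by
      rw [hU]; ext ω; simp
    rw [this]; exact h0
  have hUfull : μ (⋃ m, Teq m) = 1 := by
    have h := measure_add_measure_compl (μ := μ) hUmeas
    rw [hcompl, add_zero, measure_univ] at h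
    exact h
  have hsum1 : (∑' m, μ (Teq m)) = 1 := by
    rw [← measure_iUnion hdisj hTeqMeas, hUfull]
  have ha : (∑' m, μ {ω | PFdef d n m A fun i : Fin m => X i ω}) * μ Av = 1 := by
    rw [← ENNReal.tsum_mul_right]
    rw [← hsum1]
    exact tsum_congr fun m => (hμTeq m).symm
  have hainv : (∑' m, μ {ω | PFdef d n m A fun i : Fin m => X i ω}) = (μ Av)⁻¹ :=
    ENNReal.eq_inv_of_mul_eq_one_left ha
  -- measure of `R`
  have hRU : μ R = μ (R ∩ ⋃ m, Teq m) := by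
    refine le_antisymm ?_ (measure_mono Set.inter_subset_left)
    calc μ R = μ ((R ∩ ⋃ m, Teq m) ∪ (R \ ⋃ m, Teq m)) := by
          rw [Set.inter_union_diff]
      _ ≤ μ (R ∩ ⋃ m, Teq m) + μ (R \ ⋃ m, Teq m) := measure_union_le _ _
      _ ≤ μ (R ∩ ⋃ m, Teq m) + 0 := by
          refine add_le_add le_rfl ?_
          refine le_of_le_of_eq (measure_mono ?_) hcompl
          intro ω hω
          exact fun h => hω.2 h
      _ = μ (R ∩ ⋃ m, Teq m) := add_zero _
  have hμR : μ R = (∑' m, μ {ω | PFdef d n m A fun i : Fin m => X i ω}) * μ (Av ∩ Bev) := by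
    rw [hRU, Set.inter_iUnion]
    have hdisj' : Pairwise (Function.onFun Disjoint fun m => R ∩ Teq m) :=
      fun a b hab => (hdisj hab).mono Set.inter_subset_right Set.inter_subset_right
    have hmeas' : ∀ m, MeasurableSet (R ∩ Teq m) := by
      intro m
      rw [hRdec m]
      exact (meas_event hXmeas hXint m (PFdef d n m A)).inter
        (meas_event (fun i => hXmeas (m + i)) (hXint' m) n
          (fun v => PGdef d n A v ∧ PHdef d n B v))
    rw [measure_iUnion hdisj' hmeas', ← ENNReal.tsum_mul_right]
    exact tsum_congr fun m => hμRTeq m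
  -- conclude
  have hAvMeas : MeasurableSet Av := by
    rw [hAvPG]; exact meas_event hXmeas hXint n (PGdef d n A)
  rw [cond_apply hAvMeas μ Bev, hμR, hainv]
end
end

section
/- Let (X_k) be i.i.d. ℤ^d-valued random variables, S_k the partial sums, A a linear subspace of ℝ^d, and T_n = inf { k : S_k ∈ A, S^{int}_{k+t} ∉ A for t ∈ (0,n] } with P(T_n < ∞) = 1. Then the process (S_{T_n+k} − S_{T_n})_{k=1,…,n} is independent of S_{T_n}. -/
open scoped NNReal ENNReal
open MeasureTheory ProbabilityTheory

noncomputable section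

set_option linter.unusedSectionVars false

namespace PostTn

section S1
variable {Ω : Type*} {d n : ℕ} (A : Submodule ℝ (EuclideanSpace ℝ (Fin d)))
  {X : ℕ → Ω → EuclideanSpace ℝ (Fin d)}

local notation "E" => EuclideanSpace ℝ (Fin d)

/-- the segment from `a` (exclusive) to `a+b` (inclusive) meets `A`. -/
def Hit (a b : E) : Prop := ∃ t : ℝ, 0 < t ∧ t ≤ 1 ∧ a + t • b ∈ A

lemma mem_iff_proj (x : E) : x ∈ A ↔ Submodule.orthogonalProjectionOnto Aᗮ x = 0 := by
  rw [Submodule.orthogonalProjectionOnto_eq_zero_iff, Submodule.orthogonal_orthogonal]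

lemma measurableSet_hit : MeasurableSet {p : E × E | Hit A p.1 p.2} := by
  classical
  set P : E →L[ℝ] Aᗮ := Submodule.orthogonalProjectionOnto Aᗮ with hP
  have key : ∀ a b : E, Hit A a b ↔
      ((P b = 0 ∧ P a = 0) ∨
        (P b ≠ 0 ∧ (0:ℝ) < -(inner ℝ (P b) (P a) : ℝ) / ‖P b‖^2 ∧
          -(inner ℝ (P b) (P a) : ℝ) / ‖P b‖^2 ≤ 1 ∧
          P a + (-(inner ℝ (P b) (P a) : ℝ) / ‖P b‖^2) • P b = 0)) := by
    intro a b
    constructor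
    · rintro ⟨t, ht0, ht1, htA⟩
      have h0 : P a + t • P b = 0 := by
        have := (mem_iff_proj A _).1 htA
        simpa [map_add, _root_.map_smul] using this
      by_cases hb : P b = 0
      · left
        refine ⟨hb, ?_⟩
        simpa [hb] using h0
      · right
        have ht : t = -(inner ℝ (P b) (P a) : ℝ) / ‖P b‖^2 := by
          have hPa : P a = -(t • P b) := by
            rwa [add_eq_zero_iff_eq_neg] at h0
          have hnb : (‖P b‖:ℝ) ^ 2 ≠ 0 := pow_ne_zero _ (norm_ne_zero_iff.2 hb)
          rw [hPa, inner_neg_right, inner_smul_right, real_inner_self_eq_norm_sq, neg_neg,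
            mul_div_assoc, div_self hnb, mul_one]
        exact ⟨hb, ht ▸ ht0, ht ▸ ht1, ht ▸ h0⟩
    · rintro (⟨hb, ha⟩ | ⟨hb, h1, h2, h3⟩)
      · refine ⟨1, one_pos, le_refl _, (mem_iff_proj A _).2 ?_⟩
        simp [map_add, _root_.map_smul, ← hP, ha, hb]
      · exact ⟨_, h1, h2, (mem_iff_proj A _).2 (by simpa [map_add, _root_.map_smul] using h3)⟩
  have : {p : E × E | Hit A p.1 p.2} =
      ({p : E × E | P p.2 = 0} ∩ {p | P p.1 = 0}) ∪
      ({p : E × E | P p.2 = 0}ᶜ ∩ ({p | (0:ℝ) < -(inner ℝ (P p.2) (P p.1) : ℝ) / ‖P p.2‖^2}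
        ∩ ({p | -(inner ℝ (P p.2) (P p.1) : ℝ) / ‖P p.2‖^2 ≤ 1}
        ∩ {p | P p.1 + (-(inner ℝ (P p.2) (P p.1) : ℝ) / ‖P p.2‖^2) • P p.2 = 0}))) := by
    ext p
    simpa [Set.mem_setOf_eq, Set.mem_inter_iff, Set.mem_union] using key p.1 p.2
  rw [this]
  have hm1 : Measurable fun p : E × E => P p.1 := P.continuous.measurable.comp measurable_fst
  have hm2 : Measurable fun p : E × E => P p.2 := P.continuous.measurable.comp measurable_snd
  have hmt : Measurable fun p : E × E => -(inner ℝ (P p.2) (P p.1) : ℝ) / ‖P p.2‖^2 :=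
    ((hm2.inner hm1).neg).div ((hm2.norm).pow measurable_const)
  refine ((hm2 (MeasurableSet.singleton 0)).inter (hm1 (MeasurableSet.singleton 0))).union
    (((hm2 (MeasurableSet.singleton 0)).compl).inter
      ((measurableSet_lt measurable_const hmt).inter
        ((measurableSet_le hmt measurable_const).inter ?_)))
  exact measurableSet_eq_fun (hm1.add (hmt.smul hm2)) measurable_const


lemma walk_succ (k : ℕ) (ω : Ω) : walk d X (k+1) ω = walk d X k ω + X k ω := by
  simp [walk, Finset.sum_range_succ]

lemma avoid_iff (k : ℕ) (ω : Ω) :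
    (∀ t : ℝ, (k : ℝ) < t → t ≤ (k : ℝ) + n →
      walkInt d X t ω ∉ (A : Set (EuclideanSpace ℝ (Fin d)))) ↔
    (∀ i < n, ¬ Hit A (walk d X (k+i) ω) (X (k+i) ω)) := by
  constructor
  · intro h i hi ⟨t', ht0, ht1, hA⟩
    have hin : (i:ℝ) + 1 ≤ n := by exact_mod_cast hi
    rcases eq_or_lt_of_le ht1 with h1 | h1
    · refine h (((k+i+1 : ℕ) : ℝ)) (by push_cast; linarith [Nat.cast_nonneg (α := ℝ) i])
        (by push_cast; linarith) ?_
      have he : walkInt d X ((k+i+1 : ℕ) : ℝ) ω = walk d X (k+i+1) ω := by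
        rw [walkInt, Nat.floor_natCast]
        simp
      rw [he, walk_succ]
      rw [h1, one_smul] at hA
      exact hA
    · refine h ((k:ℝ)+i+t') (by linarith [Nat.cast_nonneg (α := ℝ) i]) (by linarith) ?_
      have hfl : ⌊(k:ℝ)+i+t'⌋₊ = k + i := by
        rw [Nat.floor_eq_iff (by positivity)]
        push_cast
        constructor <;> linarith
      have he : walkInt d X ((k:ℝ)+i+t') ω
          = walk d X (k+i) ω + t' • X (k+i) ω := by
        rw [walkInt, hfl]
        congr 1
        push_cast
        congr 1
        ring
      rw [he]; exact hA
  · intro h t htk htkn hA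
    have ht0 : (0:ℝ) ≤ t := le_trans (Nat.cast_nonneg k) (le_of_lt htk)
    have hkm : k ≤ ⌊t⌋₊ := Nat.le_floor (le_of_lt htk)
    have hmt : (⌊t⌋₊:ℝ) ≤ t := Nat.floor_le ht0
    rcases eq_or_lt_of_le hmt with he | hlt
    · have hkm' : k < ⌊t⌋₊ := by
        have : (k:ℝ) < (⌊t⌋₊:ℝ) := by rw [he]; exact htk
        exact_mod_cast this
      have hmkn : ⌊t⌋₊ ≤ k + n := by
        have : (⌊t⌋₊:ℝ) ≤ (k:ℝ) + n := by rw [he]; exact htkn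
        exact_mod_cast this
      obtain ⟨i, hieq⟩ : ∃ i, ⌊t⌋₊ = k + i + 1 := ⟨⌊t⌋₊ - k - 1, by omega⟩
      refine h i (by omega) ⟨1, one_pos, le_refl _, ?_⟩
      have hwi : walkInt d X t ω = walk d X (k+i+1) ω := by
        rw [walkInt, hieq, ← he, hieq]
        simp
      rw [one_smul, ← walk_succ, ← hwi]
      exact hA
    · have hmn : ⌊t⌋₊ < k + n := by
        have : (⌊t⌋₊:ℝ) < (k:ℝ) + n := lt_of_lt_of_le hlt htkn
        exact_mod_cast this
      obtain ⟨i, hieq⟩ : ∃ i, ⌊t⌋₊ = k + i := ⟨⌊t⌋₊ - k, by omega⟩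
      have hki : ((k+i:ℕ):ℝ) ≤ t := by rw [← hieq]; exact hmt
      have hki2 : ((k+i:ℕ):ℝ) < t := by rw [← hieq]; exact hlt
      have htm1 : t < ((k+i:ℕ):ℝ) + 1 := by
        rw [← hieq]; exact Nat.lt_floor_add_one t
      refine h i (by omega) ⟨t - ((k+i:ℕ):ℝ), by linarith, by linarith, ?_⟩
      have hwi : walkInt d X t ω = walk d X (k+i) ω + (t - ((k+i:ℕ):ℝ)) • X (k+i) ω := by
        rw [walkInt, hieq]
      rw [← hwi]
      exact hA

def Inn (n : ℕ) (A : Submodule ℝ (EuclideanSpace ℝ (Fin d)))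
    (X : ℕ → Ω → EuclideanSpace ℝ (Fin d)) (k : ℕ) (ω : Ω) : Prop :=
  walk d X k ω ∈ A ∧ ∀ i < n, ¬ Hit A (walk d X (k+i) ω) (X (k+i) ω)

lemma mem_TnSet_iff (k : ℕ) (ω : Ω) : k ∈ TnSet d n A X ω ↔ Inn n A X k ω := by
  unfold TnSet Inn
  rw [Set.mem_setOf_eq, avoid_iff]
  simp [SetLike.mem_coe]


end S1

section S2
variable {Ω : Type*} [MeasurableSpace Ω] {μ : Measure Ω} [IsProbabilityMeasure μ]
  {d n : ℕ} {X : ℕ → Ω → EuclideanSpace ℝ (Fin d)}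

local notation "E" => EuclideanSpace ℝ (Fin d)

lemma map_tuple_eq (hXmeas : ∀ k, Measurable (X k))
    (hindep : iIndepFun X μ)
    (hident : ∀ k, IdentDistrib (X k) (X 0) μ μ) (k : ℕ) :
    Measure.map (fun ω (i : Fin n) => X (k + i) ω) μ
      = Measure.pi (fun _ : Fin n => Measure.map (X 0) μ) := by
  have hmeas : Measurable (fun ω (i : Fin n) => X (k + i) ω) :=
    measurable_pi_lambda _ fun i => hXmeas _
  have hprob : IsProbabilityMeasure (Measure.map (X 0) μ) :=
    Measure.isProbabilityMeasure_map (hXmeas 0).aemeasurable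
  refine (Measure.pi_eq (μ := fun _ : Fin n => Measure.map (X 0) μ) fun s hs => ?_).symm
  rw [Measure.map_apply hmeas (MeasurableSet.univ_pi hs)]
  classical
  set sets : ℕ → Set E := fun j =>
    if h : k ≤ j ∧ j - k < n then s ⟨j - k, h.2⟩ else Set.univ with hsets
  have hpre : (fun ω (i : Fin n) => X (k + i) ω) ⁻¹' (Set.univ.pi s)
      = ⋂ j ∈ Finset.Ico k (k + n), X j ⁻¹' sets j := by
    ext ω
    simp only [Set.mem_preimage, Set.mem_univ_pi, Set.mem_iInter, Finset.mem_Ico, hsets]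
    constructor
    · intro h j hj
      have h1 : k ≤ j ∧ j - k < n := ⟨hj.1, by omega⟩
      rw [dif_pos h1]
      have := h ⟨j - k, h1.2⟩
      simpa [Nat.add_sub_cancel' hj.1] using this
    · intro h i
      have := h (k + i) ⟨Nat.le_add_right _ _, by omega⟩
      rw [dif_pos ⟨Nat.le_add_right _ _, by omega⟩] at this
      simpa using this
  have hsetsm : ∀ j, j ∈ Finset.Ico k (k + n) → MeasurableSet (sets j) := by
    intro j _
    simp only [hsets]
    by_cases h : k ≤ j ∧ j - k < n
    · rw [dif_pos h]; exact hs _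
    · rw [dif_neg h]; exact MeasurableSet.univ
  rw [hpre, hindep.measure_inter_preimage_eq_mul _ hsetsm,
    Finset.prod_Ico_eq_prod_range]
  simp only [Nat.add_sub_cancel_left]
  have hL : ∀ i ∈ Finset.range n, μ (X (k + i) ⁻¹' sets (k + i))
      = μ (X 0 ⁻¹' sets (k + i)) := by
    intro i hi
    refine (hident (k + i)).measure_preimage_eq (hsetsm _ ?_)
    simp only [Finset.mem_Ico]
    have := Finset.mem_range.1 hi
    omega
  rw [Finset.prod_congr rfl hL]
  have hR : ∀ i : Fin n, (Measure.map (X 0) μ) (s i) = μ (X 0 ⁻¹' sets (k + (i : ℕ))) := by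
    intro i
    rw [Measure.map_apply (hXmeas 0) (hs i)]
    congr 1
    simp only [hsets]
    rw [dif_pos ⟨Nat.le_add_right _ _, by omega⟩]
    have : (⟨k + (i:ℕ) - k, by omega⟩ : Fin n) = i := by
      apply Fin.ext
      simp
    rw [this]
  rw [Finset.prod_congr rfl (fun i _ => hR i)]
  exact (Fin.prod_univ_eq_prod_range (fun x => μ (X 0 ⁻¹' sets (k + x))) n).symm

lemma indep_past_future (hXmeas : ∀ k, Measurable (X k))
    (hindep : iIndepFun X μ) (k : ℕ) :
    IndepFun (fun ω (j : Fin k) => X j ω) (fun ω (i : Fin n) => X (k + i) ω) μ := by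
  have hdisj : Disjoint (Finset.range k) (Finset.Ico k (k + n)) := by
    simp only [Finset.disjoint_left, Finset.mem_range, Finset.mem_Ico]
    omega
  have h := hindep.indepFun_finset (Finset.range k) (Finset.Ico k (k + n)) hdisj hXmeas
  have hφ : Measurable (fun (f : (j : (Finset.range k : Finset ℕ)) → EuclideanSpace ℝ (Fin d))
      (j : Fin k) => f ⟨(j : ℕ), Finset.mem_range.2 j.isLt⟩) :=
    measurable_pi_lambda _ fun j => measurable_pi_apply _
  have hψ : Measurable (fun (f : (j : (Finset.Ico k (k + n) : Finset ℕ)) → EuclideanSpace ℝ (Fin d))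
      (i : Fin n) => f ⟨k + (i : ℕ), by simp [Finset.mem_Ico]⟩) :=
    measurable_pi_lambda _ fun j => measurable_pi_apply _
  exact IndepFun.comp (γ := Fin k → EuclideanSpace ℝ (Fin d))
    (γ' := Fin n → EuclideanSpace ℝ (Fin d)) h hφ hψ


end S2

section S3
variable {Ω : Type*} {d n : ℕ} {A : Submodule ℝ (EuclideanSpace ℝ (Fin d))}
  {X : ℕ → Ω → EuclideanSpace ℝ (Fin d)}

local notation "E" => EuclideanSpace ℝ (Fin d)

def psum {m : ℕ} (v : Fin m → E) (j : ℕ) : E :=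
  ∑ i ∈ Finset.range j, if h : i < m then v ⟨i, h⟩ else 0

def dval {m : ℕ} (v : Fin m → E) (j : ℕ) : E :=
  if h : j < m then v ⟨j, h⟩ else 0

lemma measurable_psum (m j : ℕ) : Measurable (fun v : Fin m → E => psum v j) := by
  apply Finset.measurable_sum
  intro i _
  by_cases h : i < m
  · simp only [dif_pos h]
    exact measurable_pi_apply _
  · simp only [dif_neg h]
    exact measurable_const

lemma measurable_dval (m j : ℕ) : Measurable (fun v : Fin m → E => dval v j) := by
  unfold dval
  by_cases h : j < m
  · simp only [dif_pos h]
    exact measurable_pi_apply _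
  · simp only [dif_neg h]
    exact measurable_const

def Uk (X : ℕ → Ω → EuclideanSpace ℝ (Fin d)) (k : ℕ) : Ω → (Fin k → E) :=
  fun ω j => X j ω

def Vk (X : ℕ → Ω → EuclideanSpace ℝ (Fin d)) (n k : ℕ) : Ω → (Fin n → E) :=
  fun ω i => X (k + i) ω

lemma walk_eq_psum {k m : ℕ} (hm : m ≤ k) (ω : Ω) :
    walk d X m ω = psum (Uk X k ω) m := by
  unfold walk psum Uk
  refine Finset.sum_congr rfl fun i hi => ?_
  rw [dif_pos (lt_of_lt_of_le (Finset.mem_range.1 hi) hm)]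

lemma walk_add_sub (k m : ℕ) (ω : Ω) :
    walk d X (k + m) ω - walk d X k ω = ∑ i ∈ Finset.range m, X (k + i) ω := by
  unfold walk
  rw [Finset.sum_range_add]
  abel

lemma walkdiff_eq_psum {k m : ℕ} (hm : m ≤ n) (ω : Ω) :
    walk d X (k + m) ω - walk d X k ω = psum (Vk X n k ω) m := by
  rw [walk_add_sub]
  unfold psum Vk
  refine Finset.sum_congr rfl fun i hi => ?_
  rw [dif_pos (lt_of_lt_of_le (Finset.mem_range.1 hi) hm)]

def PkSet (A : Submodule ℝ (EuclideanSpace ℝ (Fin d)))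
    (X : ℕ → Ω → EuclideanSpace ℝ (Fin d)) (n k : ℕ) : Set Ω :=
  {ω | walk d X k ω ∈ A ∧ ∀ j, j + n < k → ¬ Inn n A X j ω}

def GkSet (A : Submodule ℝ (EuclideanSpace ℝ (Fin d)))
    (X : ℕ → Ω → EuclideanSpace ℝ (Fin d)) (n k : ℕ) : Set Ω :=
  {ω | ∀ i < n, ¬ Hit A (walk d X (k + i) ω - walk d X k ω) (X (k + i) ω)}

def Yk (X : ℕ → Ω → EuclideanSpace ℝ (Fin d)) (n k : ℕ) : Ω → (Fin n → E) :=
  fun ω i => walk d X (k + i + 1) ω - walk d X k ω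

def InnT (A : Submodule ℝ (EuclideanSpace ℝ (Fin d))) (n k : ℕ)
    (v : Fin k → E) (j : ℕ) : Prop :=
  psum v j ∈ A ∧ ∀ i < n, ¬ Hit A (psum v (j + i)) (dval v (j + i))

def B1 (A : Submodule ℝ (EuclideanSpace ℝ (Fin d))) (n k : ℕ) (t : Set E) :
    Set (Fin k → E) :=
  {v | (psum v k ∈ A ∧ ∀ j, j + n < k → ¬ InnT A n k v j) ∧ psum v k ∈ t}

def B2 (A : Submodule ℝ (EuclideanSpace ℝ (Fin d))) {n : ℕ} (s : Set (Fin n → E)) :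
    Set (Fin n → E) :=
  {v | (∀ i < n, ¬ Hit A (psum v i) (dval v i)) ∧ (fun i : Fin n => psum v (i + 1)) ∈ s}

lemma Inn_iff_InnT {j k : ℕ} (hjk : j + n < k) (ω : Ω) :
    Inn n A X j ω ↔ InnT A n k (Uk X k ω) j := by
  unfold Inn InnT
  have hj : psum (Uk X k ω) j = walk d X j ω := (walk_eq_psum (by omega) ω).symm
  rw [hj]
  refine and_congr Iff.rfl (forall_congr' fun i => imp_congr_right fun hi => not_congr ?_)
  have h1 : psum (Uk X k ω) (j + i) = walk d X (j + i) ω := (walk_eq_psum (by omega) ω).symm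
  have h2 : dval (Uk X k ω) (j + i) = X (j + i) ω := by
    unfold dval Uk
    rw [dif_pos (by omega : j + i < k)]
  rw [h1, h2]

lemma PkSet_inter_eq (k : ℕ) (t : Set (EuclideanSpace ℝ (Fin d))) :
    PkSet A X n k ∩ (fun ω => walk d X k ω) ⁻¹' t = Uk X k ⁻¹' B1 A n k t := by
  ext ω
  simp only [PkSet, B1, Set.mem_inter_iff, Set.mem_setOf_eq, Set.mem_preimage]
  have hk : psum (Uk X k ω) k = walk d X k ω := (walk_eq_psum le_rfl ω).symm
  rw [hk]
  constructor
  · rintro ⟨⟨h1, h2⟩, h3⟩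
    exact ⟨⟨h1, fun j hj => fun hI => h2 j hj ((Inn_iff_InnT hj ω).2 hI)⟩, h3⟩
  · rintro ⟨⟨h1, h2⟩, h3⟩
    exact ⟨⟨h1, fun j hj => fun hI => h2 j hj ((Inn_iff_InnT hj ω).1 hI)⟩, h3⟩

lemma GkSet_inter_eq (k : ℕ) (s : Set (Fin n → EuclideanSpace ℝ (Fin d))) :
    GkSet A X n k ∩ Yk X n k ⁻¹' s = Vk X n k ⁻¹' B2 A s := by
  ext ω
  simp only [GkSet, B2, Yk, Set.mem_inter_iff, Set.mem_setOf_eq, Set.mem_preimage]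
  have h1 : ∀ i < n, psum (Vk X n k ω) i = walk d X (k + i) ω - walk d X k ω :=
    fun i hi => (walkdiff_eq_psum (le_of_lt hi) ω).symm
  have h2 : (fun i : Fin n => psum (Vk X n k ω) ((i : ℕ) + 1))
      = fun i : Fin n => walk d X (k + (i : ℕ) + 1) ω - walk d X k ω := by
    funext i
    rw [← walkdiff_eq_psum (by omega) ω, add_assoc]
  have h3 : ∀ i, i < n → dval (Vk X n k ω) i = X (k + i) ω := by
    intro i hi
    unfold dval Vk
    rw [dif_pos hi]
  rw [h2]
  constructor
  · rintro ⟨hG, hY⟩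
    exact ⟨fun i hi => by rw [h1 i hi, h3 i hi]; exact hG i hi, hY⟩
  · rintro ⟨hG, hY⟩
    exact ⟨fun i hi => by rw [← h3 i hi, ← h1 i hi]; exact hG i hi, hY⟩

lemma measurableSet_hitf {m : ℕ} {f g : (Fin m → E) → E}
    (hf : Measurable f) (hg : Measurable g) :
    MeasurableSet {v : Fin m → E | Hit A (f v) (g v)} :=
  (hf.prodMk hg) (measurableSet_hit A)

lemma measurableSet_A : MeasurableSet (A : Set E) :=
  (Submodule.closed_of_finiteDimensional A).measurableSet

lemma measurableSet_InnT (n k j : ℕ) :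
    MeasurableSet {v : Fin k → E | InnT A n k v j} := by
  unfold InnT
  rw [Set.setOf_and]
  refine MeasurableSet.inter ((measurable_psum k j) (measurableSet_A (A := A))) ?_
  rw [Set.setOf_forall]
  refine MeasurableSet.iInter fun i => ?_
  by_cases hi : i < n
  · simp only [hi, true_implies]
    exact (measurableSet_hitf (measurable_psum k (j + i)) (measurable_dval k (j + i))).compl
  · simp only [hi, false_implies, Set.setOf_true]
    exact MeasurableSet.univ

lemma measurableSet_B1 (n k : ℕ) {t : Set (EuclideanSpace ℝ (Fin d))}
    (ht : MeasurableSet t) : MeasurableSet (B1 A n k t) := by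
  unfold B1
  rw [Set.setOf_and, Set.setOf_and]
  refine MeasurableSet.inter (MeasurableSet.inter
    ((measurable_psum k k) (measurableSet_A (A := A))) ?_) ((measurable_psum k k) ht)
  rw [Set.setOf_forall]
  refine MeasurableSet.iInter fun j => ?_
  by_cases hj : j + n < k
  · simp only [hj, true_implies]
    exact (measurableSet_InnT n k j).compl
  · simp only [hj, false_implies, Set.setOf_true]
    exact MeasurableSet.univ

lemma measurableSet_B2 {s : Set (Fin n → EuclideanSpace ℝ (Fin d))}
    (hs : MeasurableSet s) : MeasurableSet (B2 A s) := by
  unfold B2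
  rw [Set.setOf_and]
  refine MeasurableSet.inter ?_ ?_
  · rw [Set.setOf_forall]
    refine MeasurableSet.iInter fun i => ?_
    by_cases hi : i < n
    · simp only [hi, true_implies]
      exact (measurableSet_hitf (measurable_psum n i) (measurable_dval n i)).compl
    · simp only [hi, false_implies, Set.setOf_true]
      exact MeasurableSet.univ
  · have hm : Measurable (fun v : Fin n → E => (fun i : Fin n => psum v ((i : ℕ) + 1))) :=
      measurable_pi_lambda _ fun i => measurable_psum n ((i : ℕ) + 1)
    exact hm hs

lemma hit_sub {a b c : EuclideanSpace ℝ (Fin d)} (hc : c ∈ A) :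
    Hit A (a - c) b ↔ Hit A a b := by
  unfold Hit
  constructor
  · rintro ⟨t, h1, h2, h3⟩
    refine ⟨t, h1, h2, ?_⟩
    have he : a + t • b = (a - c + t • b) + c := by abel
    rw [he]
    exact A.add_mem h3 hc
  · rintro ⟨t, h1, h2, h3⟩
    refine ⟨t, h1, h2, ?_⟩
    have he : a - c + t • b = (a + t • b) - c := by abel
    rw [he]
    exact A.sub_mem h3 hc

lemma PG_eq (k : ℕ) : PkSet A X n k ∩ GkSet A X n k
    = {ω | Inn n A X k ω ∧ ∀ j < k, ¬ Inn n A X j ω} := by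
  ext ω
  simp only [PkSet, GkSet, Set.mem_inter_iff, Set.mem_setOf_eq]
  constructor
  · rintro ⟨⟨hkA, hpast⟩, hG⟩
    have hInn : Inn n A X k ω :=
      ⟨hkA, fun i hi hH => hG i hi ((hit_sub hkA).2 hH)⟩
    refine ⟨hInn, fun j hjk hIj => ?_⟩
    by_cases hcase : j + n < k
    · exact hpast j hcase hIj
    · obtain ⟨hjA, hseg⟩ := hIj
      refine hseg (k - 1 - j) (by omega) ⟨1, one_pos, le_rfl, ?_⟩
      rw [one_smul, ← walk_succ]
      have he : j + (k - 1 - j) + 1 = k := by omega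
      rw [he]
      exact hkA
  · rintro ⟨⟨hkA, hseg⟩, hlt⟩
    exact ⟨⟨hkA, fun j hj => hlt j (by omega)⟩,
      fun i hi hH => hseg i hi ((hit_sub hkA).1 hH)⟩

lemma sInf_TnSet_eq {k : ℕ} {ω : Ω} (h1 : Inn n A X k ω)
    (h2 : ∀ j < k, ¬ Inn n A X j ω) : sInf (TnSet d n A X ω) = k := by
  have hk : k ∈ TnSet d n A X ω := (mem_TnSet_iff A k ω).2 h1
  refine le_antisymm (Nat.sInf_le hk) ?_
  by_contra hc
  push_neg at hc
  exact h2 _ hc ((mem_TnSet_iff A _ ω).1 (Nat.sInf_mem ⟨k, hk⟩))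

end S3


section S4
variable {Ω : Type*} [MeasurableSpace Ω] {μ : Measure Ω} [IsProbabilityMeasure μ]
  {d n : ℕ} {A : Submodule ℝ (EuclideanSpace ℝ (Fin d))}
  {X : ℕ → Ω → EuclideanSpace ℝ (Fin d)}

local notation "E" => EuclideanSpace ℝ (Fin d)

lemma vk_ident (hXmeas : ∀ k, Measurable (X k))
    (hindep : iIndepFun X μ)
    (hident : ∀ k, IdentDistrib (X k) (X 0) μ μ) (k : ℕ)
    {B : Set (Fin n → E)} (hB : MeasurableSet B) :
    μ (Vk X n k ⁻¹' B) = μ (Vk X n 0 ⁻¹' B) := by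
  have hmk : Measurable (Vk X n k) := measurable_pi_lambda _ fun i => hXmeas _
  have hm0 : Measurable (Vk X n 0) := measurable_pi_lambda _ fun i => hXmeas _
  rw [← Measure.map_apply hmk hB, ← Measure.map_apply hm0 hB]
  unfold Vk
  rw [map_tuple_eq hXmeas hindep hident k, map_tuple_eq hXmeas hindep hident 0]

lemma step_indep (hXmeas : ∀ k, Measurable (X k))
    (hindep : iIndepFun X μ)
    (hident : ∀ k, IdentDistrib (X k) (X 0) μ μ) (k : ℕ)
    {s : Set (Fin n → E)} (hs : MeasurableSet s)
    {t : Set E} (ht : MeasurableSet t) :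
    μ ((PkSet A X n k ∩ (fun ω => walk d X k ω) ⁻¹' t) ∩ (GkSet A X n k ∩ Yk X n k ⁻¹' s))
      = μ (PkSet A X n k ∩ (fun ω => walk d X k ω) ⁻¹' t)
        * μ (GkSet A X n 0 ∩ Yk X n 0 ⁻¹' s) := by
  rw [PkSet_inter_eq, GkSet_inter_eq, GkSet_inter_eq]
  have hind : IndepFun (Uk X k) (Vk X n k) μ := indep_past_future hXmeas hindep k
  rw [hind.measure_inter_preimage_eq_mul _ _ (measurableSet_B1 n k ht) (measurableSet_B2 hs),
    vk_ident hXmeas hindep hident k (measurableSet_B2 hs)]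

lemma cover_compl_null (hfin : ∀ᵐ ω ∂μ, (TnSet d n A X ω).Nonempty) :
    μ (⋃ k, PkSet A X n k ∩ GkSet A X n k)ᶜ = 0 := by
  rw [Filter.eventually_iff, mem_ae_iff] at hfin
  refine measure_mono_null ?_ hfin
  intro ω hω
  simp only [Set.mem_compl_iff, Set.mem_iUnion, not_exists] at hω ⊢
  simp only [Set.mem_setOf_eq]
  intro hne
  apply hω (sInf (TnSet d n A X ω))
  rw [PG_eq]
  refine ⟨(mem_TnSet_iff A _ ω).1 (Nat.sInf_mem hne), fun j hj hIj => ?_⟩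
  exact Nat.notMem_of_lt_sInf hj ((mem_TnSet_iff A j ω).2 hIj)

lemma mem_PG_sInf_eq {k : ℕ} {ω : Ω}
    (h : ω ∈ PkSet A X n k ∩ GkSet A X n k) : sInf (TnSet d n A X ω) = k := by
  rw [PG_eq] at h
  exact sInf_TnSet_eq h.1 h.2

lemma PG_disjoint : Pairwise (Function.onFun Disjoint
    (fun k => PkSet A X n k ∩ GkSet A X n k)) := by
  intro k l hkl
  rw [Function.onFun, Set.disjoint_left]
  intro ω hk hl
  exact hkl ((mem_PG_sInf_eq hk).symm.trans (mem_PG_sInf_eq hl))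

lemma Ek_measurable (hXmeas : ∀ k, Measurable (X k)) (k : ℕ)
    {s : Set (Fin n → E)} (hs : MeasurableSet s)
    {t : Set E} (ht : MeasurableSet t) :
    MeasurableSet ((PkSet A X n k ∩ (fun ω => walk d X k ω) ⁻¹' t)
      ∩ (GkSet A X n k ∩ Yk X n k ⁻¹' s)) := by
  rw [PkSet_inter_eq, GkSet_inter_eq]
  have hU : Measurable (Uk X k) := measurable_pi_lambda _ fun j => hXmeas _
  have hV : Measurable (Vk X n k) := measurable_pi_lambda _ fun i => hXmeas _
  exact (hU (measurableSet_B1 n k ht)).inter (hV (measurableSet_B2 hs))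

lemma PG_measurable (hXmeas : ∀ k, Measurable (X k)) (k : ℕ) :
    MeasurableSet (PkSet A X n k ∩ GkSet A X n k) := by
  have h : PkSet A X n k ∩ GkSet A X n k
      = (PkSet A X n k ∩ (fun ω => walk d X k ω) ⁻¹' Set.univ)
        ∩ (GkSet A X n k ∩ Yk X n k ⁻¹' Set.univ) := by
    simp
  rw [h]
  exact Ek_measurable hXmeas k MeasurableSet.univ MeasurableSet.univ

end S4
end PostTn

open PostTn

/-- The process `(S_{T_n+k} − S_{T_n})_{k=1,…,n}` is independent of `S_{T_n}`. -/
theorem post_Tn_increments_indep {Ω : Type*} [MeasurableSpace Ω] (μ : Measure Ω)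
    [IsProbabilityMeasure μ] (d n : ℕ)
    (A : Submodule ℝ (EuclideanSpace ℝ (Fin d)))
    (X : ℕ → Ω → EuclideanSpace ℝ (Fin d))
    (hXmeas : ∀ k, Measurable (X k))
    (hXint : ∀ k ω i, ∃ m : ℤ, X k ω i = (m : ℝ))
    (hindep : iIndepFun X μ)
    (hident : ∀ k, IdentDistrib (X k) (X 0) μ μ)
    (hfin : ∀ᵐ ω ∂μ, (TnSet d n A X ω).Nonempty)
    (hpos : μ {ω | ∀ t : ℝ, 0 < t → t ≤ (n : ℝ) →
      walkInt d X t ω ∉ (A : Set (EuclideanSpace ℝ (Fin d)))} ≠ 0) :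
    IndepFun
      (fun ω => fun k : Fin n =>
        walk d X (sInf (TnSet d n A X ω) + (k : ℕ) + 1) ω
          - walk d X (sInf (TnSet d n A X ω)) ω)
      (fun ω => walk d X (sInf (TnSet d n A X ω)) ω) μ := by
  classical
  rw [indepFun_iff_measure_inter_preimage_eq_mul]
  intro s t hs ht
  set Y : Ω → (Fin n → EuclideanSpace ℝ (Fin d)) := fun ω => fun k : Fin n =>
    walk d X (sInf (TnSet d n A X ω) + (k : ℕ) + 1) ω
      - walk d X (sInf (TnSet d n A X ω)) ω with hYdef
  set Z : Ω → EuclideanSpace ℝ (Fin d) :=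
    fun ω => walk d X (sInf (TnSet d n A X ω)) ω with hZdef
  have key : ∀ (s' : Set (Fin n → EuclideanSpace ℝ (Fin d))), MeasurableSet s' →
      ∀ (t' : Set (EuclideanSpace ℝ (Fin d))), MeasurableSet t' →
      μ (Y ⁻¹' s' ∩ Z ⁻¹' t')
        = (∑' k, μ (PkSet A X n k ∩ (fun ω => walk d X k ω) ⁻¹' t'))
          * μ (GkSet A X n 0 ∩ Yk X n 0 ⁻¹' s') := by
    intro s' hs' t' ht'
    have hcov : μ (⋃ k, PkSet A X n k ∩ GkSet A X n k)ᶜ = 0 := cover_compl_null hfin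
    rw [← measure_inter_conull hcov]
    have hdecomp : (Y ⁻¹' s' ∩ Z ⁻¹' t') ∩ (⋃ k, PkSet A X n k ∩ GkSet A X n k)
        = ⋃ k, ((PkSet A X n k ∩ (fun ω => walk d X k ω) ⁻¹' t')
            ∩ (GkSet A X n k ∩ Yk X n k ⁻¹' s')) := by
      ext ω
      simp only [Set.mem_inter_iff, Set.mem_iUnion, Set.mem_preimage, hYdef, hZdef]
      constructor
      · rintro ⟨⟨hY1, hZ1⟩, k, hk⟩
        have hT : sInf (TnSet d n A X ω) = k := mem_PG_sInf_eq hk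
        rw [hT] at hY1 hZ1
        refine ⟨k, ⟨hk.1, hZ1⟩, hk.2, ?_⟩
        have hYk : Yk X n k ω = fun i : Fin n =>
            walk d X (k + (i : ℕ) + 1) ω - walk d X k ω := rfl
        rw [hYk]
        exact hY1
      · rintro ⟨k, ⟨hP, hZ1⟩, hG, hY1⟩
        have hk : ω ∈ PkSet A X n k ∩ GkSet A X n k := ⟨hP, hG⟩
        have hT : sInf (TnSet d n A X ω) = k := mem_PG_sInf_eq hk
        rw [hT]
        exact ⟨⟨hY1, hZ1⟩, k, hk⟩
    rw [hdecomp]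
    rw [measure_iUnion ?hdisj (fun k => Ek_measurable hXmeas k hs' ht')]
    case hdisj =>
      intro k l hkl
      have hd : Disjoint (PkSet A X n k ∩ GkSet A X n k) (PkSet A X n l ∩ GkSet A X n l) :=
        PG_disjoint (A := A) (X := X) (n := n) hkl
      refine hd.mono ?_ ?_
      · intro ω hω
        exact ⟨hω.1.1, hω.2.1⟩
      · intro ω hω
        exact ⟨hω.1.1, hω.2.1⟩
    rw [← ENNReal.tsum_mul_right]
    exact tsum_congr fun k => step_indep hXmeas hindep hident k hs' ht'
  have h1 := key s hs t ht
  have h2 := key s hs Set.univ MeasurableSet.univ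
  have h3 := key Set.univ MeasurableSet.univ t ht
  have h4 := key Set.univ MeasurableSet.univ Set.univ MeasurableSet.univ
  simp only [Set.preimage_univ, Set.inter_univ, Set.univ_inter] at h2 h3 h4
  rw [measure_univ] at h4
  rw [h1, h2, h3]
  have h5 : ∀ a b c e : ℝ≥0∞, (a * b) * (c * e) = (c * b) * (a * e) := by
    intros; ring
  rw [h5, ← h4, mul_one]

end
end

section
/- (Continuous mapping theorem, a.e.-continuous version) Let S, S' be metric spaces, μ_n, μ Borel probability measures on S with μ_n ⇒ μ, and h : S → S' a Borel measurable map whose set of discontinuity points D_h satisfies μ(D_h) = 0. Then μ_n ∘ h^{-1} ⇒ μ ∘ h^{-1} on S'. -/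
open MeasureTheory Filter
open scoped BoundedContinuousFunction

noncomputable section

/-- Continuous mapping theorem, a.e.-continuous version: if `μ_n ⇒ μ` on a metric
space `S` and `h : S → S'` is Borel measurable with `μ`-null discontinuity set,
then `μ_n ∘ h⁻¹ ⇒ μ ∘ h⁻¹`. (Weak convergence is expressed by convergence of
integrals of bounded continuous functions.) -/
theorem continuous_mapping_theorem
    {S S' : Type*} [MetricSpace S] [MeasurableSpace S] [BorelSpace S]
    [MetricSpace S'] [MeasurableSpace S'] [BorelSpace S']
    (μn : ℕ → Measure S) (μ : Measure S)
    [∀ n, IsProbabilityMeasure (μn n)] [IsProbabilityMeasure μ]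
    (hweak : ∀ f : S →ᵇ ℝ,
      Tendsto (fun n => ∫ x, f x ∂(μn n)) atTop (nhds (∫ x, f x ∂μ)))
    (h : S → S') (hmeas : Measurable h)
    (hcont : μ {x : S | ¬ ContinuousAt h x} = 0) :
    ∀ g : S' →ᵇ ℝ,
      Tendsto (fun n => ∫ y, g y ∂((μn n).map h)) atTop
        (nhds (∫ y, g y ∂(μ.map h))) := by
  -- Package everything as `ProbabilityMeasure`s.
  set P : ProbabilityMeasure S := ⟨μ, inferInstance⟩ with hP_def
  set Pn : ℕ → ProbabilityMeasure S := fun n => ⟨μn n, inferInstance⟩ with hPn_def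
  have hP : Tendsto Pn atTop (nhds P) :=
    ProbabilityMeasure.tendsto_iff_forall_integral_tendsto.mpr hweak
  -- For every closed set `F` in `S'`, `limsup μn (h⁻¹ F) ≤ μ (h⁻¹ F)`.
  have key_closed : ∀ F : Set S', IsClosed F →
      (atTop.limsup fun n => μn n (h ⁻¹' F)) ≤ μ (h ⁻¹' F) := by
    intro F F_closed
    have incl : closure (h ⁻¹' F) ⊆ (h ⁻¹' F) ∪ {x : S | ¬ ContinuousAt h x} := by
      intro x hx
      by_cases hc : ContinuousAt h x
      · left
        have : h x ∈ closure (h '' (h ⁻¹' F)) :=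
          (hc.continuousWithinAt).mem_closure_image hx
        have : h x ∈ closure F := closure_mono (Set.image_preimage_subset h F) this
        simpa [F_closed.closure_eq] using this
      · right; exact hc
    calc (atTop.limsup fun n => μn n (h ⁻¹' F))
        ≤ atTop.limsup fun n => μn n (closure (h ⁻¹' F)) := by
          apply limsup_le_limsup
          · exact Eventually.of_forall fun n => measure_mono subset_closure
          · isBoundedDefault
          · isBoundedDefault
      _ ≤ μ (closure (h ⁻¹' F)) :=
          ProbabilityMeasure.limsup_measure_closed_le_of_tendsto hP isClosed_closure
      _ ≤ μ ((h ⁻¹' F) ∪ {x : S | ¬ ContinuousAt h x}) := measure_mono incl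
      _ ≤ μ (h ⁻¹' F) + μ {x : S | ¬ ContinuousAt h x} := measure_union_le _ _
      _ = μ (h ⁻¹' F) := by rw [hcont, add_zero]
  -- Hence for every open set `G`, `μ (h⁻¹ G) ≤ liminf μn (h⁻¹ G)`.
  have key_open : ∀ G : Set S', IsOpen G →
      μ (h ⁻¹' G) ≤ atTop.liminf fun n => μn n (h ⁻¹' G) := by
    intro G G_open
    exact le_measure_liminf_of_limsup_measure_compl_le
      (hmeas (G_open.measurableSet))
      (by simpa [Set.preimage_compl] using key_closed Gᶜ (isClosed_compl_iff.mpr G_open))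
  -- The pushforward probability measures.
  have key : Tendsto (fun n => (Pn n).map hmeas.aemeasurable) atTop
      (nhds (P.map hmeas.aemeasurable)) := by
    apply tendsto_of_forall_isOpen_le_liminf
    intro G G_open
    have h1 : (P.map hmeas.aemeasurable) G = (μ (h ⁻¹' G)).toNNReal := by
      rw [ProbabilityMeasure.map_apply _ hmeas.aemeasurable G_open.measurableSet]
      rfl
    have h2 : ∀ n, (Pn n).map hmeas.aemeasurable G = (μn n (h ⁻¹' G)).toNNReal := by
      intro n
      rw [ProbabilityMeasure.map_apply _ hmeas.aemeasurable G_open.measurableSet]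
      rfl
    rw [h1]
    simp_rw [h2]
    -- reduce to the `ℝ≥0∞` statement
    have aux : (ENNReal.ofNNReal (atTop.liminf fun n => (μn n (h ⁻¹' G)).toNNReal)) =
        atTop.liminf fun n => ENNReal.ofNNReal (μn n (h ⁻¹' G)).toNNReal := by
      refine Monotone.map_liminf_of_continuousAt (F := atTop) ENNReal.coe_mono _ ?_ ?_ ?_
      · exact ENNReal.continuous_coe.continuousAt
      · refine IsBoundedUnder.isCoboundedUnder_ge ⟨1, ?_⟩
        rw [Filter.eventually_map]
        filter_upwards with k
        simpa using ENNReal.toNNReal_mono ENNReal.one_ne_top (prob_le_one (μ := μn k))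
      · exact ⟨0, by simp⟩
    have coe_eq : ∀ n, ENNReal.ofNNReal (μn n (h ⁻¹' G)).toNNReal = μn n (h ⁻¹' G) :=
      fun n => ENNReal.coe_toNNReal (measure_ne_top _ _)
    rw [← ENNReal.coe_le_coe, aux]
    simp_rw [coe_eq]
    calc (ENNReal.ofNNReal (μ (h ⁻¹' G)).toNNReal)
        = μ (h ⁻¹' G) := ENNReal.coe_toNNReal (measure_ne_top _ _)
      _ ≤ atTop.liminf fun n => μn n (h ⁻¹' G) := key_open G G_open
  -- translate back to integrals
  have := ProbabilityMeasure.tendsto_iff_forall_integral_tendsto.mp key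
  intro g
  have hg := this g
  exact hg
end
end

section
/- Let f : [0,∞) → ℝ^d be continuous with f(0) = 0, let A be a linear subspace of ℝ^d, and suppose f(t) ∉ A for all t ∈ (0,1]. For any sequence f_k → f uniformly on [0,2] with f_k(0) = 0, the values T(f_k) = inf { t : f_k(t) ∈ A, f_k(u) ∉ A for t < u ≤ t+1 } converge to 0. -/
open scoped NNReal ENNReal
open Filter

noncomputable section

/-- If `f ∈ C_0^d[0,∞)` avoids `A` on `(0,1]` and `f_k → f` uniformly on `[0,2]`
with `f_k ∈ C_0^d[0,∞)`, then `T(f_k) → 0`. -/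
theorem tendsto_hittingTime_of_tendstoUniformlyOn (d : ℕ)
    (A : Submodule ℝ (EuclideanSpace ℝ (Fin d)))
    (f : ℝ≥0 → EuclideanSpace ℝ (Fin d)) (hf : Continuous f) (hf0 : f 0 = 0)
    (havoid : ∀ t : ℝ≥0, 0 < t → t ≤ 1 → f t ∉ (A : Set (EuclideanSpace ℝ (Fin d))))
    (F : ℕ → ℝ≥0 → EuclideanSpace ℝ (Fin d))
    (hFcont : ∀ k, Continuous (F k)) (hF0 : ∀ k, F k 0 = 0)
    (hFconv : TendstoUniformlyOn F f atTop (Set.Icc (0 : ℝ≥0) 2)) :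
    Tendsto (fun k => hittingTime d A (F k)) atTop (nhds 0) := by
  classical
  have hA_closed : IsClosed (A : Set (EuclideanSpace ℝ (Fin d))) :=
    Submodule.closed_of_finiteDimensional A
  have hAne : (A : Set (EuclideanSpace ℝ (Fin d))).Nonempty := ⟨0, A.zero_mem⟩
  set g : ℝ≥0 → ℝ := fun t => Metric.infDist (f t) (A : Set (EuclideanSpace ℝ (Fin d)))
    with hgdef
  have hgcont : Continuous g := (Metric.continuous_infDist_pt _).comp hf
  have hgpos : ∀ t : ℝ≥0, 0 < t → t ≤ 1 → 0 < g t := fun t ht ht1 =>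
    (hA_closed.notMem_iff_infDist_pos hAne).1 (havoid t ht ht1)
  have hg1 : 0 < g 1 := hgpos 1 one_pos le_rfl
  -- find η > 0 such that g > g 1 / 2 on [1, 1+η]
  have h1 : ∀ᶠ t in nhds (1 : ℝ≥0), g 1 / 2 < g t :=
    hgcont.continuousAt.eventually (eventually_gt_nhds (half_lt_self hg1))
  rw [Metric.eventually_nhds_iff] at h1
  obtain ⟨r, hr, h1⟩ := h1
  set η : ℝ≥0 := (r / 2).toNNReal with hηdef
  have hη : 0 < η := Real.toNNReal_pos.2 (by linarith)
  have hηprop : ∀ t : ℝ≥0, 1 ≤ t → t ≤ 1 + η → g 1 / 2 < g t := by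
    intro t h1t htη
    apply h1
    have hc : (t : ℝ) ≤ 1 + (r / 2) := by
      have := (NNReal.coe_le_coe.2 htη)
      push_cast at this
      have hle : (η : ℝ) = r / 2 := Real.coe_toNNReal (r/2) (by linarith)
      linarith
    have h1c : (1 : ℝ) ≤ (t : ℝ) := by exact_mod_cast h1t
    rw [NNReal.dist_eq, abs_of_nonneg (by push_cast; linarith)]
    push_cast
    linarith
  rw [ENNReal.tendsto_nhds_zero]
  intro ε hε
  obtain ⟨c, hc0, hcε⟩ : ∃ c : ℝ≥0, 0 < c ∧ (c : ℝ≥0∞) ≤ ε := by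
    rcases eq_or_ne ε ∞ with h | h
    · exact ⟨1, one_pos, h ▸ le_top⟩
    · exact ⟨ε.toNNReal, ENNReal.toNNReal_pos hε.ne' h,
        (ENNReal.coe_toNNReal h).le⟩
  set ε₀ : ℝ≥0 := min (min c 1) η with hε₀def
  have hε₀pos : 0 < ε₀ := lt_min (lt_min hc0 one_pos) hη
  have hε₀1 : ε₀ ≤ 1 := le_trans (min_le_left _ _) (min_le_right _ _)
  have hε₀η : ε₀ ≤ η := min_le_right _ _
  have hε₀c : ε₀ ≤ c := le_trans (min_le_left _ _) (min_le_left _ _)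
  -- uniform positive lower bound for g on [ε₀, 1]
  obtain ⟨x₀, hx₀mem, hx₀min⟩ := isCompact_Icc.exists_isMinOn
    (Set.nonempty_Icc.2 hε₀1) hgcont.continuousOn
  have hδ₂ : 0 < g x₀ := hgpos x₀ (lt_of_lt_of_le hε₀pos hx₀mem.1) hx₀mem.2
  set δ : ℝ := min (g x₀) (g 1 / 2) with hδdef
  have hδpos : 0 < δ := lt_min hδ₂ (half_pos hg1)
  have hglb : ∀ t : ℝ≥0, ε₀ ≤ t → t ≤ 1 + ε₀ → δ ≤ g t := by
    intro t ht1 ht2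
    rcases le_or_gt t 1 with h | h
    · exact le_trans (min_le_left _ _) (hx₀min ⟨ht1, h⟩)
    · exact le_trans (min_le_right _ _)
        (hηprop t h.le (ht2.trans (add_le_add_right hε₀η 1))).le
  filter_upwards [Metric.tendstoUniformlyOn_iff.1 hFconv (δ / 2) (half_pos hδpos)] with k hk
  -- F k avoids A on [ε₀, 1+ε₀]
  have hFaway : ∀ t : ℝ≥0, ε₀ ≤ t → t ≤ 1 + ε₀ →
      F k t ∉ (A : Set (EuclideanSpace ℝ (Fin d))) := by
    intro t h1t h2t hmem
    have ht2 : t ∈ Set.Icc (0 : ℝ≥0) 2 :=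
      ⟨zero_le, h2t.trans (by calc (1 : ℝ≥0) + ε₀ ≤ 1 + 1 := add_le_add_right hε₀1 1
                                _ = 2 := by norm_num)⟩
    have hdist := hk t ht2
    have hle : g t ≤ Metric.infDist (F k t) (A : Set (EuclideanSpace ℝ (Fin d)))
        + dist (f t) (F k t) := Metric.infDist_le_infDist_add_dist
    rw [Metric.infDist_zero_of_mem hmem] at hle
    have := hglb t h1t h2t
    linarith
  -- last hit of F k before ε₀
  set S : Set ℝ≥0 := {t : ℝ≥0 | t ≤ ε₀ ∧ F k t ∈ (A : Set (EuclideanSpace ℝ (Fin d)))}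
    with hSdef
  have hSclosed : IsClosed S := (isClosed_Iic).inter (hA_closed.preimage (hFcont k))
  have hSne : S.Nonempty := ⟨0, zero_le, by rw [hF0 k]; exact A.zero_mem⟩
  have hSbdd : BddAbove S := ⟨ε₀, fun t ht => ht.1⟩
  set tk : ℝ≥0 := sSup S with htkdef
  have htkS : tk ∈ S := hSclosed.csSup_mem hSne hSbdd
  have htkle : tk ≤ ε₀ := csSup_le hSne fun t ht => ht.1
  have hmem : (tk : ℝ≥0∞) ∈ {x : ℝ≥0∞ | ∃ t : ℝ≥0, x = (t : ℝ≥0∞) ∧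
      F k t ∈ (A : Set (EuclideanSpace ℝ (Fin d))) ∧
      ∀ u : ℝ≥0, t < u → u ≤ t + 1 → F k u ∉ (A : Set (EuclideanSpace ℝ (Fin d)))} := by
    refine ⟨tk, rfl, htkS.2, fun u hu1 hu2 humem => ?_⟩
    rcases le_or_gt u ε₀ with h | h
    · exact absurd (le_csSup hSbdd ⟨h, humem⟩) (not_le.2 hu1)
    · exact hFaway u h.le
        (hu2.trans (by rw [add_comm]; exact add_le_add_right htkle 1)) humem
  calc hittingTime d A (F k) ≤ (tk : ℝ≥0∞) := sInf_le hmem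
    _ ≤ (c : ℝ≥0∞) := ENNReal.coe_le_coe.2 (htkle.trans hε₀c)
    _ ≤ ε := hcε
end
end
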